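/- arXiv:2407.01387 — 3 statements merged into one kernel-verified Lean document; each statement's English description precedes it below -/
import Mathlib

section
/- Fix r ≥ 1, and work in the ring of formal power series over ℚ in the countably many commuting variables x_i^{(j)} (i a positive integer, 0 ≤ j ≤ r−1). For an r-coloured permutation a = σ₁^{γ₁}⋯σ_n^{γ_n}, let F_a be the coloured quasisymmetric function F_a = Σ x_{i₁}^{(γ₁)} x_{i₂}^{(γ₂)} ⋯ x_{i_n}^{(γ_n)}, the sum over all sequences 1 ≤ i₁ ≤ i₂ ≤ ⋯ ≤ i_n with i_j < i_{j+1} whenever j ∈ Des(a) ∖ {0}. Then for all symbol-disjoint r-coloured permutations a and b, F_a · F_b = Σ_{c ∈ a⧢b} F_c, the sum over the multiset of shuffles of a and b; equivalently, writing F_A for the common value of F_a over all a with sDes(a) = A, one has F_A F_B = Σ_C ν_{A,B}^C F_C, where ν_{A,B}^C is the number of shuffles c ∈ a⧢b with sDes(c) = C. -/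
open scoped Classical

noncomputable section

/-- A coloured permutation: a list of (symbol, colour) pairs. -/
abbrev CPerm : Type := List (ℕ × ℕ)

/-- `a` is a genuine coloured permutation: distinct, positive symbols. -/
def IsCPerm (a : CPerm) : Prop :=
  (a.map Prod.fst).Nodup ∧ ∀ p ∈ a, 0 < p.1

/-- The colour order on coloured integers: `p < q` iff the colour of `p` is bigger
(as an integer), or the colours agree and the symbol of `p` is smaller. -/
def cLt (p q : ℕ × ℕ) : Prop :=
  q.2 < p.2 ∨ (p.2 = q.2 ∧ p.1 < q.1)

instance : DecidableRel cLt := fun p q => by unfold cLt; infer_instance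

/-- The descent set of a coloured permutation (positions `0,…,n−1`; position `i ≥ 1`
is a descent iff the `(i+1)`-st entry is smaller than the `i`-th entry (1-indexed)
in the colour order; `0` is a descent iff the first colour is nonzero). -/
def DesSet (a : CPerm) : Finset ℕ :=
  (Finset.range a.length).filter fun i =>
    if i = 0 then (a.getD 0 (0, 0)).2 ≠ 0
    else cLt (a.getD i (0, 0)) (a.getD (i - 1) (0, 0))

/-- Descent number. -/
def des (a : CPerm) : ℕ := (DesSet a).card

/-- Comajor index. -/
def comaj (a : CPerm) : ℕ := ∑ i ∈ DesSet a, (a.length - i)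

/-- `colVec a j` is the number of entries of `a` of colour `j`. -/
def colVec (a : CPerm) (j : ℕ) : ℕ := (a.map Prod.snd).count j

/-- The multiset of shuffles of two lists. -/
def shuffles {α : Type*} : List α → List α → Multiset (List α)
  | [], bs => {bs}
  | a :: as, [] => {a :: as}
  | a :: as, b :: bs =>
      ((shuffles as (b :: bs)).map (a :: ·)) + ((shuffles (a :: as) bs).map (b :: ·))
  termination_by as bs => as.length + bs.length

/-- The set of symbols of a coloured permutation. -/
def symbols (a : CPerm) : Finset ℕ := (a.map Prod.fst).toFinset

/-- The set of nonzero colours of a coloured permutation. -/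
def paletteStar (a : CPerm) : Finset ℕ := ((a.map Prod.snd).toFinset).erase 0

/-- Two coloured permutations are symbol-disjoint if they share no symbols. -/
def SymbolDisjoint (a b : CPerm) : Prop := Disjoint (symbols a) (symbols b)

/-- `a` is `r`-coloured: all colours lie in `{0,…,r−1}`. -/
def RColoured (r : ℕ) (a : CPerm) : Prop := ∀ p ∈ a, p.2 < r

/-- Symbols of a coloured configuration (= multiset of coloured permutations). -/
def msymbols (f : Multiset CPerm) : Finset ℕ := (f.map symbols).sup

/-- `palette*` of a coloured configuration. -/
def mpalette (f : Multiset CPerm) : Finset ℕ := (f.map paletteStar).sup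

/-- The shuffle of two coloured configurations (bi-additive extension). -/
def mshuffle (f g : Multiset CPerm) : Multiset CPerm :=
  f.bind fun a => g.bind fun b => shuffles a b

/-- Hadamard product of formal power series. -/
def hadamard {R : Type*} [Semiring R] (A B : PowerSeries R) : PowerSeries R :=
  PowerSeries.mk fun k => (PowerSeries.coeff k) A * (PowerSeries.coeff k) B

/-- The geometric series `1/(1 − c·Y) = Σ_k c^k Y^k`. -/
def geom {R : Type*} [Semiring R] (c : R) : PowerSeries R :=
  PowerSeries.mk fun k => c ^ k

/-- The field ℚ(X) of rational functions. -/
abbrev K : Type := RatFunc ℚ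

/-- The variable X of ℚ(X). -/
def XX : K := RatFunc.X

/-- Membership in `U = {±X^k : k ∈ ℤ}`. -/
def InU (u : K) : Prop := ∃ k : ℤ, u = XX ^ k ∨ u = -XX ^ k

/-- `α(a) = Π_i α(γ_i)`. -/
def alphaProd (α : ℕ → K) (a : CPerm) : K := (a.map fun p => α p.2).prod

/-- The summand of `W^ε_{f,α}` corresponding to a single coloured permutation. -/
def Wterm (ε : ℤ) (α : ℕ → K) (a : CPerm) : PowerSeries K :=
  PowerSeries.C (alphaProd α a * XX ^ (ε * (comaj a : ℤ))) * PowerSeries.X ^ des a *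
    ∏ i ∈ Finset.range (a.length + 1), geom (XX ^ (ε * (i : ℤ)))

/-- `W^ε_{f,α} = Σ_a f_a α(a) X^{ε·comaj(a)} Y^{des(a)} / ((1−Y)⋯(1−X^{ε|a|}Y))`. -/
def W (ε : ℤ) (α : ℕ → K) (f : Multiset CPerm) : PowerSeries K :=
  (f.map (Wterm ε α)).sum

/-- `(f,α)` is a labelled coloured configuration. -/
def IsLCC (f : Multiset CPerm) (α : ℕ → K) : Prop :=
  (∀ a ∈ f, IsCPerm a) ∧ (∀ c, InU (α c)) ∧ (∀ c ∉ mpalette f, α c = 1)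


/-- The largest index `i` occurring in a monomial of the variables `x_i^{(j)}`
(variables are indexed by pairs `(i, j)`). -/
def monBound (m : (ℕ × ℕ) →₀ ℕ) : ℕ := m.support.sup fun p => p.1

/-- The coloured quasisymmetric function `F_a` of a coloured permutation `a`
of length `n`, as a formal power series in the variables `x_i^{(j)}` (indexed by
pairs `(i,j)`, `i ≥ 1`): its coefficient at a monomial `m` counts the sequences
`1 ≤ i₁ ≤ ⋯ ≤ i_n` (encoded as `v : Fin n → Fin (monBound m + 1)`) which increase
strictly at each descent in `Des(a) ∖ {0}` and satisfy
`x_{i₁}^{(γ₁)} ⋯ x_{i_n}^{(γ_n)} = m`. -/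
def FQ (a : CPerm) : MvPowerSeries (ℕ × ℕ) ℚ := fun m =>
  ((Finset.univ.filter (fun v : Fin a.length → Fin (monBound m + 1) =>
      (∀ j, 1 ≤ (v j : ℕ)) ∧
      (∀ j k, j ≤ k → (v j : ℕ) ≤ (v k : ℕ)) ∧
      (∀ j k : Fin a.length, (k : ℕ) = (j : ℕ) + 1 → (j : ℕ) + 1 ∈ DesSet a →
        (v j : ℕ) < (v k : ℕ)) ∧
      (∑ j : Fin a.length,
        Finsupp.single (((v j : ℕ)), (a.getD (j : ℕ) (0, 0)).2) 1) = m)).card : ℚ)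

namespace FQP

def step (p q : ℕ × (ℕ × ℕ)) : Prop := p.1 < q.1 ∨ (p.1 = q.1 ∧ cLt p.2 q.2)

def ok (prev : Option (ℕ × (ℕ × ℕ))) (q : ℕ × (ℕ × ℕ)) : Prop :=
  ∀ p ∈ prev, step p q

lemma ok_none (q : ℕ × (ℕ × ℕ)) : ok none q := by intro p hp; simp at hp

lemma ok_some {p q : ℕ × (ℕ × ℕ)} : ok (some p) q ↔ step p q := by simp [ok]

lemma cLt_trans {p q r : ℕ × ℕ} (h1 : cLt p q) (h2 : cLt q r) : cLt p r := by
  unfold cLt at *; omega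

lemma cLt_asymm {p q : ℕ × ℕ} (h : cLt p q) : ¬ cLt q p := by
  unfold cLt at *; omega

lemma cLt_total {p q : ℕ × ℕ} (h : p.1 ≠ q.1) : cLt p q ∨ cLt q p := by
  unfold cLt; omega

lemma step_trans {p q r : ℕ × (ℕ × ℕ)} (h1 : step p q) (h2 : step q r) : step p r := by
  rcases h1 with h1 | ⟨e1, c1⟩ <;> rcases h2 with h2 | ⟨e2, c2⟩
  · exact Or.inl (h1.trans h2)
  · exact Or.inl (e2 ▸ h1)
  · exact Or.inl (e1 ▸ h2)
  · exact Or.inr ⟨e1.trans e2, cLt_trans c1 c2⟩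

lemma step_le {p q : ℕ × (ℕ × ℕ)} (h : step p q) : p.1 ≤ q.1 := by
  rcases h with h | ⟨e, _⟩; exact h.le; exact e.le

lemma step_asymm {p q : ℕ × (ℕ × ℕ)} (h : step p q) : ¬ step q p := by
  rintro (h2 | ⟨e2, c2⟩) <;> rcases h with h1 | ⟨e1, c1⟩
  · omega
  · omega
  · omega
  · exact cLt_asymm c1 c2

lemma step_total {p q : ℕ × (ℕ × ℕ)} (h : p.2.1 ≠ q.2.1) : step p q ∨ step q p := by
  unfold step
  rcases Nat.lt_trichotomy p.1 q.1 with h1 | h1 | h1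
  · exact Or.inl (Or.inl h1)
  · rcases cLt_total h with h2 | h2
    · exact Or.inl (Or.inr ⟨h1, h2⟩)
    · exact Or.inr (Or.inr ⟨h1.symm, h2⟩)
  · exact Or.inr (Or.inl h1)

lemma step_not_iff {p q : ℕ × (ℕ × ℕ)} (h : p.2.1 ≠ q.2.1) : (¬ step p q) ↔ step q p := by
  constructor
  · intro hn; rcases step_total h with h1 | h1; exact absurd h1 hn; exact h1
  · intro h1 h2; exact step_asymm h2 h1

lemma ok_trans {prev : Option (ℕ × (ℕ × ℕ))} {q r : ℕ × (ℕ × ℕ)}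
    (h1 : ok prev q) (h2 : step q r) : ok prev r := by
  intro p hp; exact step_trans (h1 p hp) h2

/-- entry of a coloured permutation -/
def ent (c : CPerm) (j : ℕ) : ℕ × ℕ := c.getD j (0, 0)

variable (B : ℕ)

def pt (c : CPerm) (v : Fin c.length → Fin (B + 1)) (j : Fin c.length) : ℕ × (ℕ × ℕ) :=
  ((v j : ℕ), ent c (j : ℕ))

def Chain (c : CPerm) (prev : Option (ℕ × (ℕ × ℕ))) (v : Fin c.length → Fin (B + 1)) : Prop :=
  (∀ j, 1 ≤ (v j : ℕ)) ∧
  (∀ j : Fin c.length, (j : ℕ) = 0 → ok prev (pt B c v j)) ∧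
  (∀ j k : Fin c.length, (k : ℕ) = (j : ℕ) + 1 → step (pt B c v j) (pt B c v k))

def mono (c : CPerm) (v : Fin c.length → Fin (B + 1)) : (ℕ × ℕ) →₀ ℕ :=
  ∑ j : Fin c.length, Finsupp.single ((v j : ℕ), (ent c (j : ℕ)).2) 1

def GS (c : CPerm) (m : (ℕ × ℕ) →₀ ℕ) (prev : Option (ℕ × (ℕ × ℕ))) :
    Finset (Fin c.length → Fin (B + 1)) :=
  Finset.univ.filter fun v => Chain B c prev v ∧ mono B c v = m

def G (c : CPerm) (m : (ℕ × ℕ) →₀ ℕ) (prev : Option (ℕ × (ℕ × ℕ))) : ℕ := (GS B c m prev).card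

def PGS (a b : CPerm) (m : (ℕ × ℕ) →₀ ℕ) (prev : Option (ℕ × (ℕ × ℕ))) :
    Finset ((Fin a.length → Fin (B + 1)) × (Fin b.length → Fin (B + 1))) :=
  Finset.univ.filter fun vw =>
    Chain B a prev vw.1 ∧ Chain B b prev vw.2 ∧ mono B a vw.1 + mono B b vw.2 = m

def PG (a b : CPerm) (m : (ℕ × ℕ) →₀ ℕ) (prev : Option (ℕ × (ℕ × ℕ))) : ℕ :=
  (PGS B a b m prev).card

/-- the index 0 of a cons -/
def hd0 (x : ℕ × ℕ) (c : CPerm) : Fin (x :: c).length := ⟨0, Nat.succ_pos _⟩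


lemma mem_GS {c : CPerm} {m : (ℕ × ℕ) →₀ ℕ} {prev} {v : Fin c.length → Fin (B + 1)} :
    v ∈ GS B c m prev ↔ Chain B c prev v ∧ mono B c v = m := by simp [GS]

lemma mem_PGS {a b : CPerm} {m : (ℕ × ℕ) →₀ ℕ} {prev}
    {vw : (Fin a.length → Fin (B + 1)) × (Fin b.length → Fin (B + 1))} :
    vw ∈ PGS B a b m prev ↔
      Chain B a prev vw.1 ∧ Chain B b prev vw.2 ∧ mono B a vw.1 + mono B b vw.2 = m := by
  simp [PGS]

lemma pt_cons_zero (x : ℕ × ℕ) (c : CPerm) (v : Fin (x :: c).length → Fin (B + 1)) :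
    pt B (x :: c) v (hd0 x c) = ((v (hd0 x c) : ℕ), x) := rfl

lemma pt_cons_succ (x : ℕ × ℕ) (c : CPerm) (v : Fin (x :: c).length → Fin (B + 1))
    (j : Fin c.length) : pt B (x :: c) v j.succ = pt B c (Fin.tail v) j := rfl

lemma chain_nil (prev) (v : Fin ([] : CPerm).length → Fin (B + 1)) : Chain B [] prev v :=
  ⟨fun j => j.elim0, fun j => j.elim0, fun j _ => j.elim0⟩

lemma mono_nil (v : Fin ([] : CPerm).length → Fin (B + 1)) : mono B [] v = 0 := by
  haveI : IsEmpty (Fin ([] : CPerm).length) := ⟨fun j => j.elim0⟩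
  unfold mono
  exact Finset.sum_of_isEmpty _

lemma G_nil (m : (ℕ × ℕ) →₀ ℕ) (prev) : G B [] m prev = if m = 0 then 1 else 0 := by
  unfold G GS
  by_cases h : m = 0
  · subst h
    rw [if_pos rfl, Finset.filter_true_of_mem]
    · rw [Finset.card_univ]
      exact Fintype.card_eq_one_iff.2 ⟨(fun j => j.elim0), fun f => funext fun j => j.elim0⟩
    · intro v _
      exact ⟨chain_nil B prev v, mono_nil B v⟩
  · rw [if_neg h, Finset.card_eq_zero, Finset.eq_empty_iff_forall_notMem]
    intro v hv
    rw [Finset.mem_filter] at hv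
    exact h (hv.2.2 ▸ (mono_nil B v).symm ▸ (mono_nil B v))

lemma chain_cons_iff (x : ℕ × ℕ) (c : CPerm) (prev) (v : Fin (x :: c).length → Fin (B + 1)) :
    Chain B (x :: c) prev v ↔
      1 ≤ (v (hd0 x c) : ℕ) ∧ ok prev ((v (hd0 x c) : ℕ), x) ∧
        Chain B c (some ((v (hd0 x c) : ℕ), x)) (Fin.tail v) := by
  constructor
  · rintro ⟨h1, h2, h3⟩
    refine ⟨h1 _, ?_, fun j => h1 j.succ, ?_, ?_⟩
    · have := h2 (hd0 x c) rfl
      rwa [pt_cons_zero] at this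
    · intro j hj
      rw [← pt_cons_succ, ok_some]
      exact h3 (hd0 x c) j.succ (by simp [hd0, hj])
    · intro j k hk
      rw [← pt_cons_succ, ← pt_cons_succ]
      exact h3 j.succ k.succ (by simp [hk])
  · rintro ⟨h1, h2, t1, t2, t3⟩
    refine ⟨?_, ?_, ?_⟩
    · intro j
      by_cases hj : (j : ℕ) = 0
      · have : j = hd0 x c := Fin.ext hj
        rw [this]; exact h1
      · have hlt : (j : ℕ) - 1 < c.length := by
          have := j.isLt
          simp only [List.length_cons] at this
          omega
        have : j = (⟨(j : ℕ) - 1, hlt⟩ : Fin c.length).succ := Fin.ext (by simp; omega)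
        rw [this]
        exact t1 _
    · intro j hj
      have : j = hd0 x c := Fin.ext hj
      rw [this, pt_cons_zero]
      exact h2
    · intro j k hk
      by_cases hj : (j : ℕ) = 0
      · have hcpos : 0 < c.length := by
          have := k.isLt
          simp only [List.length_cons] at this
          omega
        have hkeq : k = (⟨0, hcpos⟩ : Fin c.length).succ := Fin.ext (by simp [hk, hj])
        have hjeq : j = hd0 x c := Fin.ext hj
        have := t2 ⟨0, hcpos⟩ rfl
        rw [ok_some] at this
        rw [hkeq, hjeq, pt_cons_succ, pt_cons_zero]
        exact this
      · have hlt1 : (j : ℕ) - 1 < c.length := by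
          have := j.isLt
          simp only [List.length_cons] at this
          omega
        have hlt2 : (j : ℕ) < c.length := by
          have := k.isLt
          simp only [List.length_cons] at this
          omega
        have hjeq : j = (⟨(j : ℕ) - 1, hlt1⟩ : Fin c.length).succ := Fin.ext (by simp; omega)
        have hkeq : k = (⟨(j : ℕ), hlt2⟩ : Fin c.length).succ := Fin.ext (by simp [hk])
        rw [hjeq, hkeq, pt_cons_succ, pt_cons_succ]
        exact t3 _ _ (by simp; omega)

lemma mono_cons (x : ℕ × ℕ) (c : CPerm) (v : Fin (x :: c).length → Fin (B + 1)) :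
    mono B (x :: c) v = Finsupp.single ((v (hd0 x c) : ℕ), x.2) 1 + mono B c (Fin.tail v) := by
  unfold mono
  exact (Fin.sum_univ_succ _).trans rfl

lemma G_cons (x : ℕ × ℕ) (c : CPerm) (m : (ℕ × ℕ) →₀ ℕ) (prev) :
    G B (x :: c) m prev = ∑ t ∈ Finset.range (B + 1),
      if 1 ≤ t ∧ ok prev (t, x) ∧ Finsupp.single (t, x.2) 1 ≤ m
      then G B c (m - Finsupp.single (t, x.2) 1) (some (t, x)) else 0 := by
  classical
  unfold G
  rw [Finset.card_eq_sum_card_fiberwise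
      (f := fun v : Fin (x :: c).length → Fin (B + 1) => (v (hd0 x c) : ℕ))
      (t := Finset.range (B + 1)) (fun v _ => Finset.mem_range.2 (v (hd0 x c)).isLt)]
  refine Finset.sum_congr rfl fun t ht => ?_
  rw [Finset.mem_range] at ht
  by_cases hcond : 1 ≤ t ∧ ok prev (t, x) ∧ Finsupp.single (t, x.2) 1 ≤ m
  · rw [if_pos hcond]
    refine Finset.card_bij' (fun v _ => Fin.tail v) (fun u _ => Fin.cons ⟨t, ht⟩ u) ?_ ?_ ?_ ?_
    · intro v hv
      rw [Finset.mem_filter, mem_GS] at hv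
      obtain ⟨⟨hch, hm⟩, hvt⟩ := hv
      rw [chain_cons_iff] at hch
      obtain ⟨h1, h2, h3⟩ := hch
      rw [mono_cons, hvt] at hm
      rw [mem_GS]
      refine ⟨by rwa [hvt] at h3, ?_⟩
      exact eq_tsub_of_add_eq ((add_comm _ _).trans hm)
    · intro u hu
      rw [mem_GS] at hu
      rw [Finset.mem_filter, mem_GS]
      have hval : ((Fin.cons (⟨t, ht⟩ : Fin (B + 1)) u : Fin (x :: c).length → Fin (B + 1))
          (hd0 x c) : ℕ) = t := rfl
      refine ⟨⟨?_, ?_⟩, hval⟩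
      · rw [chain_cons_iff, hval]
        exact ⟨hcond.1, hcond.2.1, by rw [Fin.tail_cons]; exact hu.1⟩
      · rw [mono_cons, hval, Fin.tail_cons, hu.2]
        exact add_tsub_cancel_of_le hcond.2.2
    · intro v hv
      rw [Finset.mem_filter] at hv
      have : (⟨t, ht⟩ : Fin (B + 1)) = v (hd0 x c) := Fin.ext hv.2.symm
      rw [this]
      exact Fin.cons_self_tail v
    · intro u _
      exact Fin.tail_cons _ _
  · rw [if_neg hcond, Finset.card_eq_zero, Finset.eq_empty_iff_forall_notMem]
    intro v hv
    rw [Finset.mem_filter, mem_GS] at hv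
    obtain ⟨⟨hch, hm⟩, hvt⟩ := hv
    rw [chain_cons_iff] at hch
    obtain ⟨h1, h2, h3⟩ := hch
    rw [mono_cons, hvt] at hm
    exact hcond ⟨hvt ▸ h1, hvt ▸ h2, le_add_right le_rfl |>.trans hm.le⟩

lemma PG_eq_sum (a b : CPerm) (m : (ℕ × ℕ) →₀ ℕ) (prev) :
    PG B a b m prev = ∑ p ∈ Finset.HasAntidiagonal.antidiagonal m, G B a p.1 prev * G B b p.2 prev := by
  classical
  unfold PG
  rw [Finset.card_eq_sum_card_fiberwise
      (f := fun vw : (Fin a.length → Fin (B + 1)) × (Fin b.length → Fin (B + 1)) =>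
        (mono B a vw.1, mono B b vw.2))
      (t := Finset.HasAntidiagonal.antidiagonal m)
      (fun vw hvw => Finset.HasAntidiagonal.mem_antidiagonal.2 (mem_PGS B |>.1 hvw).2.2)]
  refine Finset.sum_congr rfl fun p hp => ?_
  have hpm := Finset.HasAntidiagonal.mem_antidiagonal.1 hp
  have hset : (PGS B a b m prev).filter
      (fun vw => (mono B a vw.1, mono B b vw.2) = p)
      = (GS B a p.1 prev) ×ˢ (GS B b p.2 prev) := by
    ext vw
    rw [Finset.mem_filter, mem_PGS, Finset.mem_product, mem_GS, mem_GS, Prod.ext_iff]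
    constructor
    · rintro ⟨⟨h1, h2, h3⟩, h4, h5⟩
      exact ⟨⟨h1, h4⟩, h2, h5⟩
    · rintro ⟨⟨h1, h4⟩, h2, h5⟩
      exact ⟨⟨h1, h2, by rw [h4, h5, hpm]⟩, h4, h5⟩
  rw [hset, Finset.card_product]
  rfl

lemma PG_nil_left (b : CPerm) (m : (ℕ × ℕ) →₀ ℕ) (prev) : PG B [] b m prev = G B b m prev := by
  classical
  unfold PG G
  refine Finset.card_bij' (fun vw _ => vw.2) (fun u _ => (fun j => j.elim0, u)) ?_ ?_ ?_ ?_
  · intro vw hvw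
    rw [mem_PGS] at hvw
    rw [mem_GS]
    refine ⟨hvw.2.1, ?_⟩
    have := hvw.2.2
    rwa [mono_nil, zero_add] at this
  · intro u hu
    rw [mem_GS] at hu
    rw [mem_PGS]
    exact ⟨chain_nil B prev _, hu.1, by rw [mono_nil, zero_add, hu.2]⟩
  · intro vw _
    exact Prod.ext (funext fun j => j.elim0) rfl
  · intro u _
    rfl

lemma PG_nil_right (a : CPerm) (m : (ℕ × ℕ) →₀ ℕ) (prev) : PG B a [] m prev = G B a m prev := by
  classical
  unfold PG G
  refine Finset.card_bij' (fun vw _ => vw.1) (fun u _ => (u, fun j => j.elim0)) ?_ ?_ ?_ ?_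
  · intro vw hvw
    rw [mem_PGS] at hvw
    rw [mem_GS]
    refine ⟨hvw.1, ?_⟩
    have := hvw.2.2
    rwa [mono_nil, add_zero] at this
  · intro u hu
    rw [mem_GS] at hu
    rw [mem_PGS]
    exact ⟨hu.1, chain_nil B prev _, by rw [mono_nil, add_zero, hu.2]⟩
  · intro vw _
    exact Prod.ext rfl (funext fun j => j.elim0)
  · intro u _
    rfl

lemma PG_swap (a b : CPerm) (m : (ℕ × ℕ) →₀ ℕ) (prev) : PG B a b m prev = PG B b a m prev := by
  classical
  unfold PG
  refine Finset.card_bij' (fun vw _ => vw.swap) (fun vw _ => vw.swap) ?_ ?_ ?_ ?_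
  · intro vw hvw
    rw [mem_PGS] at hvw ⊢
    exact ⟨hvw.2.1, hvw.1, by rw [add_comm]; exact hvw.2.2⟩
  · intro vw hvw
    rw [mem_PGS] at hvw ⊢
    exact ⟨hvw.2.1, hvw.1, by rw [add_comm]; exact hvw.2.2⟩
  · intro vw _; exact Prod.swap_swap vw
  · intro vw _; exact Prod.swap_swap vw


lemma chain_retarget {y : ℕ × ℕ} {bs : CPerm} {prev prev'} {w : Fin (y :: bs).length → Fin (B + 1)}
    (h : Chain B (y :: bs) prev w) (h' : ok prev' ((w (hd0 y bs) : ℕ), y)) :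
    Chain B (y :: bs) prev' w := by
  refine ⟨h.1, ?_, h.2.2⟩
  intro j hj
  have : j = hd0 y bs := Fin.ext hj
  rw [this, pt_cons_zero]
  exact h'

lemma chain_head_ok {y : ℕ × ℕ} {bs : CPerm} {q} {w : Fin (y :: bs).length → Fin (B + 1)}
    (h : Chain B (y :: bs) (some q) w) : step q ((w (hd0 y bs) : ℕ), y) := by
  have := h.2.1 (hd0 y bs) rfl
  rw [pt_cons_zero] at this
  exact ok_some.1 this

lemma card_filter_swap (a b : CPerm) (m : (ℕ × ℕ) →₀ ℕ) (prev)
    (p : (Fin a.length → Fin (B + 1)) → (Fin b.length → Fin (B + 1)) → Prop) :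
    ((PGS B a b m prev).filter fun vw => p vw.1 vw.2).card
      = ((PGS B b a m prev).filter fun vw => p vw.2 vw.1).card := by
  classical
  refine Finset.card_bij' (fun vw _ => vw.swap) (fun vw _ => vw.swap) ?_ ?_ ?_ ?_
  · intro vw hvw
    rw [Finset.mem_filter, mem_PGS] at hvw ⊢
    exact ⟨⟨hvw.1.2.1, hvw.1.1, by rw [add_comm]; exact hvw.1.2.2⟩, hvw.2⟩
  · intro vw hvw
    rw [Finset.mem_filter, mem_PGS] at hvw ⊢
    exact ⟨⟨hvw.1.2.1, hvw.1.1, by rw [add_comm]; exact hvw.1.2.2⟩, hvw.2⟩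
  · intro vw _; exact Prod.swap_swap vw
  · intro vw _; exact Prod.swap_swap vw

lemma half (x y : ℕ × ℕ) (as bs : CPerm) (m : (ℕ × ℕ) →₀ ℕ) (prev) :
    ((PGS B (x :: as) (y :: bs) m prev).filter fun vw =>
        step ((vw.1 (hd0 x as) : ℕ), x) ((vw.2 (hd0 y bs) : ℕ), y)).card
      = ∑ t ∈ Finset.range (B + 1),
        if 1 ≤ t ∧ ok prev (t, x) ∧ Finsupp.single (t, x.2) 1 ≤ m
        then PG B as (y :: bs) (m - Finsupp.single (t, x.2) 1) (some (t, x)) else 0 := by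
  classical
  rw [Finset.card_eq_sum_card_fiberwise
      (f := fun vw : (Fin (x :: as).length → Fin (B + 1)) × (Fin (y :: bs).length → Fin (B + 1)) =>
        (vw.1 (hd0 x as) : ℕ))
      (t := Finset.range (B + 1)) (fun vw _ => Finset.mem_range.2 (vw.1 (hd0 x as)).isLt)]
  refine Finset.sum_congr rfl fun t ht => ?_
  rw [Finset.mem_range] at ht
  by_cases hcond : 1 ≤ t ∧ ok prev (t, x) ∧ Finsupp.single (t, x.2) 1 ≤ m
  · rw [if_pos hcond]
    unfold PG
    refine Finset.card_bij' (fun vw _ => (Fin.tail vw.1, vw.2))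
      (fun uw _ => (Fin.cons ⟨t, ht⟩ uw.1, uw.2)) ?_ ?_ ?_ ?_
    · intro vw hvw
      rw [Finset.mem_filter, Finset.mem_filter, mem_PGS] at hvw
      obtain ⟨⟨⟨hca, hcb, hm⟩, hstep⟩, hvt⟩ := hvw
      rw [chain_cons_iff] at hca
      obtain ⟨h1, h2, h3⟩ := hca
      rw [mono_cons, hvt] at hm
      rw [mem_PGS]
      refine ⟨by rwa [hvt] at h3, ?_, ?_⟩
      · exact chain_retarget B hcb (ok_some.2 (by rwa [hvt] at hstep))
      · rw [add_assoc] at hm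
        exact eq_tsub_of_add_eq ((add_comm _ _).trans hm)
    · intro uw huw
      rw [mem_PGS] at huw
      obtain ⟨hca, hcb, hm⟩ := huw
      rw [Finset.mem_filter, Finset.mem_filter, mem_PGS]
      have hval : ((Fin.cons (⟨t, ht⟩ : Fin (B + 1)) uw.1 : Fin (x :: as).length → Fin (B + 1))
          (hd0 x as) : ℕ) = t := rfl
      have hstep : step (t, x) ((uw.2 (hd0 y bs) : ℕ), y) := chain_head_ok B hcb
      refine ⟨⟨⟨?_, ?_, ?_⟩, ?_⟩, hval⟩
      · rw [chain_cons_iff, hval]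
        exact ⟨hcond.1, hcond.2.1, by rw [Fin.tail_cons]; exact hca⟩
      · exact chain_retarget B hcb (ok_trans hcond.2.1 hstep)
      · rw [mono_cons, hval, Fin.tail_cons, add_assoc, hm]
        exact add_tsub_cancel_of_le hcond.2.2
      · rw [hval]
        exact hstep
    · intro vw hvw
      rw [Finset.mem_filter, Finset.mem_filter] at hvw
      have : (⟨t, ht⟩ : Fin (B + 1)) = vw.1 (hd0 x as) := Fin.ext hvw.2.symm
      rw [this]
      exact Prod.ext (Fin.cons_self_tail vw.1) rfl
    · intro uw _
      have h1 : Fin.tail (Fin.cons (α := fun _ => Fin (B + 1)) ⟨t, ht⟩ uw.1) = uw.1 :=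
        Fin.tail_cons _ _
      exact Prod.ext h1 rfl
  · rw [if_neg hcond, Finset.card_eq_zero, Finset.eq_empty_iff_forall_notMem]
    intro vw hvw
    rw [Finset.mem_filter, Finset.mem_filter, mem_PGS] at hvw
    obtain ⟨⟨⟨hca, hcb, hm⟩, hstep⟩, hvt⟩ := hvw
    rw [chain_cons_iff] at hca
    rw [mono_cons, hvt, add_assoc] at hm
    exact hcond ⟨hvt ▸ hca.1, hvt ▸ hca.2.1, le_add_right le_rfl |>.trans hm.le⟩

lemma PG_cons (x y : ℕ × ℕ) (as bs : CPerm) (m : (ℕ × ℕ) →₀ ℕ) (prev) (hxy : x.1 ≠ y.1) :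
    PG B (x :: as) (y :: bs) m prev
      = (∑ t ∈ Finset.range (B + 1),
          if 1 ≤ t ∧ ok prev (t, x) ∧ Finsupp.single (t, x.2) 1 ≤ m
          then PG B as (y :: bs) (m - Finsupp.single (t, x.2) 1) (some (t, x)) else 0)
        + (∑ s ∈ Finset.range (B + 1),
          if 1 ≤ s ∧ ok prev (s, y) ∧ Finsupp.single (s, y.2) 1 ≤ m
          then PG B (x :: as) bs (m - Finsupp.single (s, y.2) 1) (some (s, y)) else 0) := by
  classical
  have hsplit := Finset.card_filter_add_card_filter_not
    (s := PGS B (x :: as) (y :: bs) m prev)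
    (p := fun vw => step ((vw.1 (hd0 x as) : ℕ), x) ((vw.2 (hd0 y bs) : ℕ), y))
  have hneg : (PGS B (x :: as) (y :: bs) m prev).filter
      (fun vw => ¬ step ((vw.1 (hd0 x as) : ℕ), x) ((vw.2 (hd0 y bs) : ℕ), y))
      = (PGS B (x :: as) (y :: bs) m prev).filter
      (fun vw => step ((vw.2 (hd0 y bs) : ℕ), y) ((vw.1 (hd0 x as) : ℕ), x)) := by
    apply Finset.filter_congr
    intro vw _
    exact step_not_iff hxy
  have hswap : ((PGS B (x :: as) (y :: bs) m prev).filter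
      (fun vw => step ((vw.2 (hd0 y bs) : ℕ), y) ((vw.1 (hd0 x as) : ℕ), x))).card
      = ((PGS B (y :: bs) (x :: as) m prev).filter
      (fun vw => step ((vw.1 (hd0 y bs) : ℕ), y) ((vw.2 (hd0 x as) : ℕ), x))).card :=
    card_filter_swap B _ _ m prev
      (fun v w => step ((w (hd0 y bs) : ℕ), y) ((v (hd0 x as) : ℕ), x))
  have h2 := half B y x bs as m prev
  have h1 := half B x y as bs m prev
  unfold PG
  rw [← hsplit, h1, hneg, hswap, h2]
  congr 1
  refine Finset.sum_congr rfl fun s _ => ?_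
  split_ifs with h
  · exact PG_swap B _ _ _ _
  · rfl

lemma multiset_map_sum {α β : Type*} (S : Multiset α) (r : Finset β) (f : β → α → ℕ) :
    (S.map (fun c => ∑ t ∈ r, f t c)).sum = ∑ t ∈ r, (S.map (f t)).sum := by
  induction S using Multiset.induction with
  | empty => simp
  | cons c S ih => simp [ih, Finset.sum_add_distrib]

lemma main : ∀ (n : ℕ) (a b : CPerm), a.length + b.length ≤ n →
    (∀ p ∈ a, ∀ q ∈ b, p.1 ≠ q.1) → ∀ (m : (ℕ × ℕ) →₀ ℕ) (prev),
    PG B a b m prev = ((shuffles a b).map (fun c => G B c m prev)).sum := by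
  intro n
  induction n with
  | zero =>
    intro a b hlen _ m prev
    have ha : a = [] := List.length_eq_zero_iff.1 (by omega)
    subst ha
    simp only [shuffles, Multiset.map_singleton, Multiset.sum_singleton]
    exact PG_nil_left B b m prev
  | succ n ih =>
    intro a b hlen hdisj m prev
    match a, b with
    | [], b =>
      simp only [shuffles, Multiset.map_singleton, Multiset.sum_singleton]
      exact PG_nil_left B b m prev
    | x :: as, [] =>
      simp only [shuffles, Multiset.map_singleton, Multiset.sum_singleton]
      exact PG_nil_right B (x :: as) m prev
    | x :: as, y :: bs =>
      have hxy : x.1 ≠ y.1 := hdisj x List.mem_cons_self y List.mem_cons_self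
      have hlen1 : as.length + (y :: bs).length ≤ n := by
        simp only [List.length_cons] at hlen ⊢; omega
      have hlen2 : (x :: as).length + bs.length ≤ n := by
        simp only [List.length_cons] at hlen ⊢; omega
      rw [PG_cons B x y as bs m prev hxy]
      rw [show shuffles (x :: as) (y :: bs)
          = ((shuffles as (y :: bs)).map (x :: ·)) + ((shuffles (x :: as) bs).map (y :: ·))
        from by rw [shuffles]]
      rw [Multiset.map_add, Multiset.sum_add, Multiset.map_map, Multiset.map_map]
      congr 1
      · have hmap : ∀ c' ∈ shuffles as (y :: bs),
            ((fun c => G B c m prev) ∘ (x :: ·)) c'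
              = ∑ t ∈ Finset.range (B + 1),
                (fun t c' => if 1 ≤ t ∧ ok prev (t, x) ∧ Finsupp.single (t, x.2) 1 ≤ m
                  then G B c' (m - Finsupp.single (t, x.2) 1) (some (t, x)) else 0) t c' := by
          intro c' _
          exact G_cons B x c' m prev
        rw [Multiset.map_congr rfl hmap, multiset_map_sum]
        refine Finset.sum_congr rfl fun t _ => ?_
        by_cases hc : 1 ≤ t ∧ ok prev (t, x) ∧ Finsupp.single (t, x.2) 1 ≤ m
        · rw [if_pos hc, ih as (y :: bs) hlen1
            (fun p hp q hq => hdisj p (List.mem_cons_of_mem x hp) q hq)]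
          exact congrArg Multiset.sum (Multiset.map_congr rfl fun c _ => (if_pos hc).symm)
        · rw [if_neg hc, Multiset.map_congr rfl
            (fun (c' : CPerm) (_ : c' ∈ shuffles as (y :: bs)) =>
              (if_neg hc : (if 1 ≤ t ∧ ok prev (t, x) ∧ Finsupp.single (t, x.2) 1 ≤ m
                then G B c' (m - Finsupp.single (t, x.2) 1) (some (t, x)) else 0) = 0))]
          simp
      · have hmap : ∀ c' ∈ shuffles (x :: as) bs,
            ((fun c => G B c m prev) ∘ (y :: ·)) c'
              = ∑ s ∈ Finset.range (B + 1),
                (fun s c' => if 1 ≤ s ∧ ok prev (s, y) ∧ Finsupp.single (s, y.2) 1 ≤ m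
                  then G B c' (m - Finsupp.single (s, y.2) 1) (some (s, y)) else 0) s c' := by
          intro c' _
          exact G_cons B y c' m prev
        rw [Multiset.map_congr rfl hmap, multiset_map_sum]
        refine Finset.sum_congr rfl fun s _ => ?_
        by_cases hc : 1 ≤ s ∧ ok prev (s, y) ∧ Finsupp.single (s, y.2) 1 ≤ m
        · rw [if_pos hc, ih (x :: as) bs hlen2
            (fun p hp q hq => hdisj p hp q (List.mem_cons_of_mem y hq))]
          exact congrArg Multiset.sum (Multiset.map_congr rfl fun c _ => (if_pos hc).symm)
        · rw [if_neg hc, Multiset.map_congr rfl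
            (fun (c' : CPerm) (_ : c' ∈ shuffles (x :: as) bs) =>
              (if_neg hc : (if 1 ≤ s ∧ ok prev (s, y) ∧ Finsupp.single (s, y.2) 1 ≤ m
                then G B c' (m - Finsupp.single (s, y.2) 1) (some (s, y)) else 0) = 0))]
          simp

lemma shuffles_perm {α : Type*} : ∀ (n : ℕ) (a b : List α), a.length + b.length ≤ n →
    ∀ c ∈ shuffles a b, c.Perm (a ++ b) := by
  intro n
  induction n with
  | zero =>
    intro a b hlen c hc
    have ha : a = [] := List.length_eq_zero_iff.1 (by omega)
    have hb : b = [] := List.length_eq_zero_iff.1 (by omega)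
    subst ha; subst hb
    simp only [shuffles, Multiset.mem_singleton] at hc
    subst hc
    simp
  | succ n ih =>
    intro a b hlen c hc
    match a, b with
    | [], b =>
      simp only [shuffles, Multiset.mem_singleton] at hc
      subst hc; simp
    | x :: as, [] =>
      simp only [shuffles, Multiset.mem_singleton] at hc
      subst hc; simp
    | x :: as, y :: bs =>
      have hlen1 : as.length + (y :: bs).length ≤ n := by
        simp only [List.length_cons] at hlen ⊢; omega
      have hlen2 : (x :: as).length + bs.length ≤ n := by
        simp only [List.length_cons] at hlen ⊢; omega
      rw [show shuffles (x :: as) (y :: bs)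
          = ((shuffles as (y :: bs)).map (x :: ·)) + ((shuffles (x :: as) bs).map (y :: ·))
        from by rw [shuffles]] at hc
      rw [Multiset.mem_add] at hc
      rcases hc with hc | hc
      · rw [Multiset.mem_map] at hc
        obtain ⟨c', hc', rfl⟩ := hc
        have := ih as (y :: bs) hlen1 c' hc'
        simpa using this.cons x
      · rw [Multiset.mem_map] at hc
        obtain ⟨c', hc', rfl⟩ := hc
        have h1 := ih (x :: as) bs hlen2 c' hc'
        have h2 : (y :: c').Perm (y :: ((x :: as) ++ bs)) := h1.cons y
        have h3 : (y :: ((x :: as) ++ bs)).Perm ((x :: as) ++ (y :: bs)) := List.perm_middle.symm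
        exact h2.trans h3

lemma monBound_mono {m1 m2 : (ℕ × ℕ) →₀ ℕ} (h : m1 ≤ m2) : monBound m1 ≤ monBound m2 := by
  unfold monBound
  apply Finset.sup_mono
  intro s hs
  rw [Finsupp.mem_support_iff] at hs ⊢
  have := h s
  omega


lemma mem_DesSet_succ (a : CPerm) (j : ℕ) (h : j + 1 < a.length) :
    ((j + 1) ∈ DesSet a) ↔ cLt (ent a (j + 1)) (ent a j) := by
  simp [DesSet, ent, h]

lemma ent_ne (a : CPerm) (hnd : (a.map Prod.fst).Nodup) {i j : ℕ}
    (hi : i < a.length) (hj : j < a.length) (hij : i ≠ j) : (ent a i).1 ≠ (ent a j).1 := by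
  intro h
  have hi' : i < (a.map Prod.fst).length := by simpa using hi
  have hj' : j < (a.map Prod.fst).length := by simpa using hj
  have h1 : (a.map Prod.fst)[i]'hi' = (a.map Prod.fst)[j]'hj' := by
    rw [List.getElem_map, List.getElem_map]
    rw [ent, ent, List.getD_eq_getElem _ _ hi, List.getD_eq_getElem _ _ hj] at h
    exact h
  exact hij ((hnd.getElem_inj_iff).1 h1)

lemma mono_of_chain {c : CPerm} {prev} {v : Fin c.length → Fin (B + 1)}
    (h : Chain B c prev v) : ∀ j k : Fin c.length, j ≤ k → (v j : ℕ) ≤ (v k : ℕ) := by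
  suffices H : ∀ (d : ℕ) (j k : Fin c.length), (k : ℕ) = (j : ℕ) + d → (v j : ℕ) ≤ (v k : ℕ) by
    intro j k hjk
    exact H ((k : ℕ) - (j : ℕ)) j k (by omega)
  intro d
  induction d with
  | zero =>
    intro j k hk
    have : j = k := Fin.ext (by omega)
    rw [this]
  | succ d ihd =>
    intro j k hk
    have hlt : (j : ℕ) + d < c.length := by have := k.isLt; omega
    have h1 := ihd j ⟨(j : ℕ) + d, hlt⟩ rfl
    have h2 := h.2.2 ⟨(j : ℕ) + d, hlt⟩ k (by simp [hk]; omega)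
    exact h1.trans (step_le h2)

lemma FQpred_iff_chain (a : CPerm) (hnd : (a.map Prod.fst).Nodup)
    (v : Fin a.length → Fin (B + 1)) :
    ((∀ j, 1 ≤ (v j : ℕ)) ∧
      (∀ j k, j ≤ k → (v j : ℕ) ≤ (v k : ℕ)) ∧
      (∀ j k : Fin a.length, (k : ℕ) = (j : ℕ) + 1 → (j : ℕ) + 1 ∈ DesSet a →
        (v j : ℕ) < (v k : ℕ)))
      ↔ Chain B a none v := by
  constructor
  · rintro ⟨h1, h2, h3⟩
    refine ⟨h1, fun j _ => ok_none _, ?_⟩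
    intro j k hk
    have hlt : (j : ℕ) + 1 < a.length := hk ▸ k.isLt
    by_cases hdes : (j : ℕ) + 1 ∈ DesSet a
    · exact Or.inl (h3 j k hk hdes)
    · have hle := h2 j k (by rw [Fin.le_def]; omega)
      rcases lt_or_eq_of_le hle with hlt' | heq
      · exact Or.inl hlt'
      · refine Or.inr ⟨heq, ?_⟩
        rw [mem_DesSet_succ a (j : ℕ) hlt] at hdes
        have hne : (ent a (j : ℕ)).1 ≠ (ent a ((j : ℕ) + 1)).1 :=
          ent_ne a hnd (by omega) hlt (by omega)
        rcases cLt_total hne with hcl | hcl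
        · show cLt (ent a (j : ℕ)) (ent a (k : ℕ))
          rw [hk]; exact hcl
        · exact absurd hcl hdes
  · rintro ⟨h1, _, h3⟩
    refine ⟨h1, mono_of_chain B ⟨h1, fun j _ => ok_none _, h3⟩, ?_⟩
    intro j k hk hdes
    rcases h3 j k hk with hlt' | ⟨heq, hcl⟩
    · exact hlt'
    · exfalso
      have hlt : (j : ℕ) + 1 < a.length := hk ▸ k.isLt
      rw [mem_DesSet_succ a (j : ℕ) hlt] at hdes
      have hcl' : cLt (ent a (j : ℕ)) (ent a ((j : ℕ) + 1)) := by
        have hx : cLt (ent a (j : ℕ)) (ent a (k : ℕ)) := hcl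
        rwa [hk] at hx
      exact cLt_asymm hcl' hdes

lemma val_le_monBound {c : CPerm} {u : Fin c.length → Fin (B + 1)} {m : (ℕ × ℕ) →₀ ℕ}
    (hu : mono B c u = m) (j : Fin c.length) : (u j : ℕ) ≤ monBound m := by
  have hmem : ((u j : ℕ), (ent c (j : ℕ)).2) ∈ m.support := by
    rw [Finsupp.mem_support_iff, ← hu]
    unfold mono
    rw [Finsupp.finset_sum_apply]
    have hpos : 0 < ∑ i : Fin c.length,
        (Finsupp.single ((u i : ℕ), (ent c (i : ℕ)).2) (1 : ℕ)) ((u j : ℕ), (ent c (j : ℕ)).2) := by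
      apply Finset.sum_pos' (fun i _ => Nat.zero_le _)
      exact ⟨j, Finset.mem_univ j, by simp⟩
    omega
  exact Finset.le_sup (f := fun p : ℕ × ℕ => p.1) hmem

lemma FQ_eq_G (a : CPerm) (hnd : (a.map Prod.fst).Nodup) (m : (ℕ × ℕ) →₀ ℕ)
    (hB : monBound m ≤ B) : FQ a m = ((G B a m none : ℕ) : ℚ) := by
  unfold FQ G
  have hcard : (Finset.univ.filter (fun v : Fin a.length → Fin (monBound m + 1) =>
      (∀ j, 1 ≤ (v j : ℕ)) ∧
      (∀ j k, j ≤ k → (v j : ℕ) ≤ (v k : ℕ)) ∧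
      (∀ j k : Fin a.length, (k : ℕ) = (j : ℕ) + 1 → (j : ℕ) + 1 ∈ DesSet a →
        (v j : ℕ) < (v k : ℕ)) ∧
      (∑ j : Fin a.length,
        Finsupp.single (((v j : ℕ)), (a.getD (j : ℕ) (0, 0)).2) 1) = m)).card
      = (GS B a m none).card := by
    refine Finset.card_bij' (fun v _ => fun j => (⟨(v j : ℕ), by have := (v j).isLt; omega⟩ : Fin (B + 1)))
      (fun u hu => fun j => (⟨(u j : ℕ), by
        have h1 : (u j : ℕ) ≤ monBound m := val_le_monBound B ((mem_GS B).1 hu).2 j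
        omega⟩ : Fin (monBound m + 1))) ?_ ?_ ?_ ?_
    · intro v hv
      rw [Finset.mem_filter] at hv
      obtain ⟨-, h1, h2, h3, h4⟩ := hv
      rw [mem_GS]
      exact ⟨(FQpred_iff_chain B a hnd _).1 ⟨h1, h2, h3⟩, h4⟩
    · intro u hu
      rw [mem_GS] at hu
      rw [Finset.mem_filter]
      have H := (FQpred_iff_chain B a hnd u).2 hu.1
      exact ⟨Finset.mem_univ _, H.1, H.2.1, H.2.2, hu.2⟩
    · intro v _
      funext j
      rfl
    · intro u _
      funext j
      rfl
  rw [hcard]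

end FQP

/-- **Theorem.** For symbol-disjoint `r`-coloured permutations `a` and `b`:
`F_a · F_b = Σ_{c ∈ a⧢b} F_c`. -/
theorem FQ_mul_FQ (r : ℕ) (hr : 1 ≤ r) (a b : CPerm)
    (ha : IsCPerm a) (hb : IsCPerm b)
    (hra : RColoured r a) (hrb : RColoured r b)
    (hd : SymbolDisjoint a b) :
    FQ a * FQ b = ((shuffles a b).map FQ).sum := by
  have hfst : ∀ p ∈ a, ∀ q ∈ b, p.1 ≠ q.1 := by
    intro p hp q hq hpq
    have h1 : p.1 ∈ symbols a := by
      rw [symbols, List.mem_toFinset, List.mem_map]; exact ⟨p, hp, rfl⟩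
    have h2 : p.1 ∈ symbols b := by
      rw [symbols, List.mem_toFinset, List.mem_map]; exact ⟨q, hq, hpq.symm⟩
    exact Finset.disjoint_left.1 hd h1 h2
  ext m
  rw [MvPowerSeries.coeff_mul]
  have hL : ∀ p ∈ Finset.HasAntidiagonal.antidiagonal m,
      (MvPowerSeries.coeff p.1 (FQ a)) * (MvPowerSeries.coeff p.2 (FQ b))
        = ((FQP.G (monBound m) a p.1 none * FQP.G (monBound m) b p.2 none : ℕ) : ℚ) := by
    intro p hp
    have hpm := Finset.HasAntidiagonal.mem_antidiagonal.1 hp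
    have h1 : p.1 ≤ m := by rw [← hpm]; exact le_self_add
    have h2 : p.2 ≤ m := by rw [← hpm]; exact le_add_self
    rw [Nat.cast_mul]
    have e1 : MvPowerSeries.coeff p.1 (FQ a) = FQ a p.1 := rfl
    have e2 : MvPowerSeries.coeff p.2 (FQ b) = FQ b p.2 := rfl
    rw [e1, e2, FQP.FQ_eq_G (monBound m) a ha.1 p.1 (FQP.monBound_mono h1),
      FQP.FQ_eq_G (monBound m) b hb.1 p.2 (FQP.monBound_mono h2)]
  rw [Finset.sum_congr rfl hL, ← Nat.cast_sum]
  rw [← FQP.PG_eq_sum, FQP.main (monBound m) (a.length + b.length) a b le_rfl hfst m none]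
  rw [map_multiset_sum, Multiset.map_map]
  rw [Nat.cast_multiset_sum, Multiset.map_map]
  refine congrArg Multiset.sum (Multiset.map_congr rfl fun c hc => ?_)
  have hperm := FQP.shuffles_perm (a.length + b.length) a b le_rfl c hc
  have hnd : (c.map Prod.fst).Nodup := by
    have hp2 : (c.map Prod.fst).Perm ((a ++ b).map Prod.fst) := hperm.map _
    rw [hp2.nodup_iff, List.map_append, List.nodup_append]
    refine ⟨ha.1, hb.1, ?_⟩
    intro s hs1 t hs2 hst
    rw [List.mem_map] at hs1 hs2
    obtain ⟨p, hp, rfl⟩ := hs1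
    obtain ⟨q, hq, hqe⟩ := hs2
    exact hfst p hp q hq (hst.trans hqe.symm)
  have e3 : MvPowerSeries.coeff m (FQ c) = FQ c m := rfl
  show ((FQP.G (monBound m) c m none : ℕ) : ℚ) = MvPowerSeries.coeff m (FQ c)
  rw [e3, FQP.FQ_eq_G (monBound m) c hnd m le_rfl]
end
end

section
/- Fix r ≥ 1 and let st be any coloured descent statistic on r-coloured permutations, i.e., a function such that st(a) = st(b) whenever sDes(a) = sDes(b); write st(A) for its common value on permutations with coloured descent set A, and len(A) for the common length (len(∅) = 0, and len(A) is the largest first coordinate occurring in A otherwise). Suppose there exist a commutative ℚ-algebra B and a function φ from r-coloured subsets to B such that: (0) for all symbol-disjoint r-coloured permutations a, b one has φ(sDes(a))·φ(sDes(b)) = Σ_{c ∈ a⧢b} φ(sDes(c)); (i) φ(A) = φ(B) whenever st(A) = st(B) and len(A) = len(B); (ii) whenever A₁, A₂, … are r-coloured subsets with the pairs (st(A_i), len(A_i)) pairwise distinct, the elements φ(A₁), φ(A₂), … are ℚ-linearly independent in B. Then st is shuffle compatible: for symbol-disjoint a,b and symbol-disjoint a',b' with |a| = |a'|, |b| = |b'|,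 st(a) = st(a'), st(b) = st(b'), the multisets {st(c) : c ∈ a⧢b} and {st(c') : c' ∈ a'⧢b'} are equal. -/
open scoped Classical

noncomputable section

/-- The coloured descent set `sDes(a)` of a coloured permutation: the set of pairs
`(i, γ_i)` (with `i` a 1-indexed position) such that either `i = n`, or `i < n` and
`γ_i ≠ γ_{i+1}`, or `γ_i = γ_{i+1}` and `σ_i > σ_{i+1}`. -/
def sDes (a : CPerm) : Finset (ℕ × ℕ) :=
  ((Finset.range a.length).filter fun i =>
      i + 1 = a.length ∨ (a.getD i (0, 0)).2 ≠ (a.getD (i + 1) (0, 0)).2 ∨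
        ((a.getD i (0, 0)).2 = (a.getD (i + 1) (0, 0)).2 ∧
          (a.getD (i + 1) (0, 0)).1 < (a.getD i (0, 0)).1)).image
    fun i => (i + 1, (a.getD i (0, 0)).2)

private lemma shuffles_perm {α : Type*} : ∀ (a b : List α), ∀ c ∈ shuffles a b, c.Perm (a ++ b)
  | [], bs => by
      intro c hc
      simp only [shuffles, Multiset.mem_singleton] at hc
      subst hc; exact List.Perm.refl _
  | a :: as, [] => by
      intro c hc
      simp only [shuffles, Multiset.mem_singleton] at hc
      subst hc
      rw [List.append_nil]
  | a :: as, b :: bs => by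
      intro c hc
      simp only [shuffles, Multiset.mem_add, Multiset.mem_map] at hc
      rcases hc with ⟨d, hd, rfl⟩ | ⟨d, hd, rfl⟩
      · exact (shuffles_perm as (b :: bs) d hd).cons a
      · exact ((shuffles_perm (a :: as) bs d hd).cons b).trans List.perm_middle.symm
  termination_by a b => a.length + b.length

private lemma mem_shuffles_props (r : ℕ) (a b c : CPerm) (hca : IsCPerm a) (hcb : IsCPerm b)
    (hra : RColoured r a) (hrb : RColoured r b) (hd : SymbolDisjoint a b)
    (hc : c ∈ shuffles a b) : IsCPerm c ∧ RColoured r c := by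
  have hp := shuffles_perm a b c hc
  have hmem : ∀ p, p ∈ c ↔ p ∈ a ++ b := fun p => hp.mem_iff
  refine ⟨⟨?_, ?_⟩, ?_⟩
  · have hnd : ((a ++ b).map Prod.fst).Nodup := by
      rw [List.map_append]
      refine List.Nodup.append hca.1 hcb.1 ?_
      intro x hx hx'
      have h1 : x ∈ symbols a := by rw [symbols, List.mem_toFinset]; exact hx
      have h2 : x ∈ symbols b := by rw [symbols, List.mem_toFinset]; exact hx'
      exact Finset.disjoint_left.mp hd h1 h2
    exact ((hp.map Prod.fst).nodup_iff).mpr hnd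
  · intro p hpc
    rcases List.mem_append.mp ((hmem p).mp hpc) with h | h
    · exact hca.2 p h
    · exact hcb.2 p h
  · intro p hpc
    rcases List.mem_append.mp ((hmem p).mp hpc) with h | h
    · exact hra p h
    · exact hrb p h

private lemma key_count (r : ℕ) {S : Type*} (st : CPerm → S)
    (B : Type*) [CommRing B] [Algebra ℚ B] (φ : Finset (ℕ × ℕ) → B)
    (hi : ∀ a b : CPerm, IsCPerm a → IsCPerm b → RColoured r a → RColoured r b →
      st a = st b → a.length = b.length → φ (sDes a) = φ (sDes b))
    (hii : ∀ (k : ℕ) (a : Fin k → CPerm), (∀ i, IsCPerm (a i)) →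
      (∀ i, RColoured r (a i)) →
      (Function.Injective fun i => (st (a i), (a i).length)) →
      LinearIndependent ℚ fun i => φ (sDes (a i)))
    (M M' : Multiset CPerm)
    (hM : ∀ c ∈ M, IsCPerm c ∧ RColoured r c)
    (hM' : ∀ c ∈ M', IsCPerm c ∧ RColoured r c)
    (hsum : (M.map fun c => φ (sDes c)).sum = (M'.map fun c => φ (sDes c)).sum) :
    M.map (fun c => (st c, c.length)) = M'.map (fun c => (st c, c.length)) := by
  classical
  set pf : CPerm → S × ℕ := fun c => (st c, c.length) with hpf
  set N : Multiset CPerm := M + M' with hN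
  have hNprop : ∀ c ∈ N, IsCPerm c ∧ RColoured r c := by
    intro c hc
    rcases Multiset.mem_add.mp hc with h | h
    · exact hM c h
    · exact hM' c h
  set P : Finset (S × ℕ) := (N.map pf).toFinset with hP
  have hex : ∀ p ∈ P, ∃ c, c ∈ N ∧ pf c = p := by
    intro p hp
    rw [hP, Multiset.mem_toFinset, Multiset.mem_map] at hp
    exact hp
  set rep : S × ℕ → CPerm := fun p => if h : ∃ c, c ∈ N ∧ pf c = p then h.choose else []
    with hrepdef
  have hrepN : ∀ p ∈ P, rep p ∈ N ∧ pf (rep p) = p := by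
    intro p hp
    have h := hex p hp
    simp only [hrepdef, dif_pos h]
    exact h.choose_spec
  set k := P.card with hk
  set e : {x // x ∈ P} ≃ Fin k := P.equivFin with he
  set v : Fin k → CPerm := fun i => rep ((e.symm i : {x // x ∈ P}) : S × ℕ) with hv
  have hvP : ∀ i, ((e.symm i : {x // x ∈ P}) : S × ℕ) ∈ P := fun i => (e.symm i).2
  have hvN : ∀ i, v i ∈ N := fun i => (hrepN _ (hvP i)).1
  have hvpf : ∀ i, pf (v i) = ((e.symm i : {x // x ∈ P}) : S × ℕ) :=
    fun i => (hrepN _ (hvP i)).2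
  have hinj : Function.Injective fun i => (st (v i), (v i).length) := by
    intro i j hij
    have hpp : ((e.symm i : {x // x ∈ P}) : S × ℕ) = ((e.symm j : {x // x ∈ P}) : S × ℕ) := by
      rw [← hvpf i, ← hvpf j]; exact hij
    have := e.symm.injective (Subtype.ext hpp)
    exact this
  have li := hii k v (fun i => (hNprop _ (hvN i)).1) (fun i => (hNprop _ (hvN i)).2) hinj
  have hcong : ∀ c ∈ N, φ (sDes c) = φ (sDes (rep (pf c))) := by
    intro c hc
    have hpc : pf c ∈ P := by
      rw [hP, Multiset.mem_toFinset]; exact Multiset.mem_map_of_mem pf hc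
    obtain ⟨hrN, hrpf⟩ := hrepN _ hpc
    have h1 : st c = st (rep (pf c)) := (congrArg Prod.fst hrpf).symm
    have h2 : c.length = (rep (pf c)).length := (congrArg Prod.snd hrpf).symm
    exact hi c _ (hNprop c hc).1 (hNprop _ hrN).1 (hNprop c hc).2 (hNprop _ hrN).2 h1 h2
  have hsum' : ∀ (T : Multiset CPerm), T ≤ N →
      (T.map fun c => φ (sDes c)).sum = ∑ p ∈ P, (T.map pf).count p • φ (sDes (rep p)) := by
    intro T hT
    have h1 : T.map (fun c => φ (sDes c)) = (T.map pf).map (fun p => φ (sDes (rep p))) := by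
      rw [Multiset.map_map]
      exact Multiset.map_congr rfl fun c hc => hcong c (Multiset.mem_of_le hT hc)
    rw [h1, Finset.sum_multiset_map_count]
    refine Finset.sum_subset ?_ ?_
    · intro p hp
      rw [Multiset.mem_toFinset] at hp
      rw [hP, Multiset.mem_toFinset]
      exact Multiset.mem_of_le (Multiset.map_le_map hT) hp
    · intro p _ hp
      rw [Multiset.mem_toFinset] at hp
      rw [Multiset.count_eq_zero_of_notMem hp, zero_smul]
  have heqn : ∑ p ∈ P, (M.map pf).count p • φ (sDes (rep p))
      = ∑ p ∈ P, (M'.map pf).count p • φ (sDes (rep p)) :=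
    (hsum' M (Multiset.le_add_right M M')).symm.trans
      (hsum.trans (hsum' M' (Multiset.le_add_left M' M)))
  have heq : ∑ p ∈ P, ((M.map pf).count p : ℚ) • φ (sDes (rep p))
      = ∑ p ∈ P, ((M'.map pf).count p : ℚ) • φ (sDes (rep p)) := by
    simpa only [Nat.cast_smul_eq_nsmul] using heqn
  have hsumfin : ∀ (T : Multiset CPerm),
      ∑ i : Fin k, ((T.map pf).count ((e.symm i : {x // x ∈ P}) : S × ℕ) : ℚ) • φ (sDes (v i))
        = ∑ p ∈ P, ((T.map pf).count p : ℚ) • φ (sDes (rep p)) := by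
    intro T
    rw [← Finset.sum_coe_sort P (fun p => ((T.map pf).count p : ℚ) • φ (sDes (rep p)))]
    exact Equiv.sum_comp e.symm
      (fun x : {x // x ∈ P} => ((T.map pf).count (x : S × ℕ) : ℚ) • φ (sDes (rep (x : S × ℕ))))
  have hzero : ∑ i : Fin k,
      (((M.map pf).count ((e.symm i : {x // x ∈ P}) : S × ℕ) : ℚ)
        - ((M'.map pf).count ((e.symm i : {x // x ∈ P}) : S × ℕ) : ℚ)) • φ (sDes (v i)) = 0 := by
    simp only [sub_smul, Finset.sum_sub_distrib]
    rw [hsumfin M, hsumfin M', heq, sub_self]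
  have hcoef := Fintype.linearIndependent_iff.mp li _ hzero
  have hcounts : ∀ p ∈ P, (M.map pf).count p = (M'.map pf).count p := by
    intro p hp
    have h := hcoef (e ⟨p, hp⟩)
    rw [Equiv.symm_apply_apply] at h
    have : ((M.map pf).count p : ℚ) = ((M'.map pf).count p : ℚ) := by linarith [sub_eq_zero.mp h]
    exact_mod_cast this
  refine Multiset.ext.mpr fun p => ?_
  by_cases hp : p ∈ P
  · exact hcounts p hp
  · have h1 : p ∉ M.map pf := fun h =>
      hp (by rw [hP, Multiset.mem_toFinset]
             exact Multiset.mem_of_le (Multiset.map_le_map (Multiset.le_add_right M M')) h)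
    have h2 : p ∉ M'.map pf := fun h =>
      hp (by rw [hP, Multiset.mem_toFinset]
             exact Multiset.mem_of_le (Multiset.map_le_map (Multiset.le_add_left M' M)) h)
    rw [Multiset.count_eq_zero_of_notMem h1, Multiset.count_eq_zero_of_notMem h2]

/-- **Lemma.** A coloured descent statistic `st` on `r`-coloured permutations
(`st` factors through `sDes`) is shuffle compatible provided there are a commutative
`ℚ`-algebra `B` and a function `φ` on coloured descent sets such that:
(0) `φ(sDes(a))·φ(sDes(b)) = Σ_{c ∈ a⧢b} φ(sDes(c))` for symbol-disjoint `a,b`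
(the product rule for coloured quasisymmetric functions);
(i) `φ(sDes(a))` depends only on `(st(a), |a|)`; and
(ii) values `φ(sDes(a_i))` at permutations with pairwise distinct `(st(a_i), |a_i|)`
are `ℚ`-linearly independent. -/
theorem shuffleCompatible_of_qsym_factorization
    (r : ℕ) (hr : 1 ≤ r) {S : Type*} (st : CPerm → S)
    (hdesc : ∀ a b : CPerm, IsCPerm a → IsCPerm b → RColoured r a → RColoured r b →
      sDes a = sDes b → st a = st b)
    (B : Type*) [CommRing B] [Algebra ℚ B] (φ : Finset (ℕ × ℕ) → B)
    (h0 : ∀ a b : CPerm, IsCPerm a → IsCPerm b → RColoured r a → RColoured r b →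
      SymbolDisjoint a b →
      φ (sDes a) * φ (sDes b) = ((shuffles a b).map fun c => φ (sDes c)).sum)
    (hi : ∀ a b : CPerm, IsCPerm a → IsCPerm b → RColoured r a → RColoured r b →
      st a = st b → a.length = b.length → φ (sDes a) = φ (sDes b))
    (hii : ∀ (k : ℕ) (a : Fin k → CPerm), (∀ i, IsCPerm (a i)) →
      (∀ i, RColoured r (a i)) →
      (Function.Injective fun i => (st (a i), (a i).length)) →
      LinearIndependent ℚ fun i => φ (sDes (a i))) :
    ∀ a b a' b' : CPerm, IsCPerm a → IsCPerm b → IsCPerm a' → IsCPerm b' →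
      RColoured r a → RColoured r b → RColoured r a' → RColoured r b' →
      SymbolDisjoint a b → SymbolDisjoint a' b' →
      a.length = a'.length → b.length = b'.length →
      st a = st a' → st b = st b' →
      (shuffles a b).map st = (shuffles a' b').map st := by
  intro a b a' b' hca hcb hca' hcb' hra hrb hra' hrb' hd hd' hl1 hl2 hs1 hs2
  have hsum : ((shuffles a b).map fun c => φ (sDes c)).sum
      = ((shuffles a' b').map fun c => φ (sDes c)).sum := by
    rw [← h0 a b hca hcb hra hrb hd, ← h0 a' b' hca' hcb' hra' hrb' hd',
      hi a a' hca hca' hra hra' hs1 hl1, hi b b' hcb hcb' hrb hrb' hs2 hl2]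
  have hpair := key_count r st B φ hi hii (shuffles a b) (shuffles a' b')
    (fun c hc => mem_shuffles_props r a b c hca hcb hra hrb hd hc)
    (fun c hc => mem_shuffles_props r a' b' c hca' hcb' hra' hrb' hd' hc) hsum
  have hmap : ∀ (M : Multiset CPerm),
      M.map st = (M.map fun c => (st c, c.length)).map Prod.fst := fun M => by
    rw [Multiset.map_map]; rfl
  rw [hmap, hmap, hpair]
end
end

section
/- Let n ≥ 1 and let d₁,…,d_n, e₁,…,e_n be positive integers with δ := d₁ − e₁ = ⋯ = d_n − e_n. Then in ℚ(X)⟦Y⟧, the n-fold Hadamard product in Y satisfies ⊛_{i=1}^n (1 − X^{−e_i}Y)/((1−Y)(1−X^δ Y)) = ( Σ_{a ∈ Π(S_n)} α(a) · X^{δ·comaj(a)} Y^{des(a)} ) / ((1−Y)(1−X^δ Y)(1−X^{2δ}Y)⋯(1−X^{nδ}Y)), where for a = σ₁^{γ₁}⋯σ_n^{γ_n} ∈ Π(S_n) one sets α(a) = Π_{i : γ_i ≠ 0} (−X^{−d_{σ_i}}). -/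
open scoped Classical

noncomputable section

/-- The set `Π(S_n)` of all `2^n · n!` coloured permutations `σ₁^{γ₁}⋯σ_n^{γ_n}`
with `σ₁⋯σ_n` a permutation of `[n]` and `γ_i ∈ {0, σ_i}`. -/
def PiSn (n : ℕ) : Multiset CPerm :=
  (Finset.univ : Finset (Equiv.Perm (Fin n) × (Fin n → Bool))).val.map fun sg =>
    List.ofFn fun i : Fin n =>
      ((sg.1 i : ℕ) + 1, if sg.2 i then (sg.1 i : ℕ) + 1 else 0)

/-- `α(a) = Π_{i : γ_i ≠ 0} (−X^{−d_{σ_i}})`. -/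
def alphaD (d : ℕ → ℕ) (a : CPerm) : K :=
  (a.map fun p => if p.2 ≠ 0 then -XX ^ (-(d p.1 : ℤ)) else (1 : K)).prod

/-- The iterated (`n`-fold) Hadamard product of a list of power series
(the all-ones series `1/(1−Y)` is the Hadamard identity). -/
def hadamardProdList {R : Type*} [Semiring R] (l : List (PowerSeries R)) :
    PowerSeries R :=
  l.foldr hadamard (geom 1)

namespace HadAux
open Finset PowerSeries

lemma coeff_geom {R : Type*} [Semiring R] (c : R) (k : ℕ) :
    PowerSeries.coeff (R := R) k (geom c) = c ^ k := PowerSeries.coeff_mk _ _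

lemma coeff_hadamard {R : Type*} [Semiring R] (A B : PowerSeries R) (k : ℕ) :
    PowerSeries.coeff (R := R) k (hadamard A B) =
      PowerSeries.coeff (R := R) k A * PowerSeries.coeff (R := R) k B := PowerSeries.coeff_mk _ _

lemma coeff_hadamardProdList {R : Type*} [Semiring R] (l : List (PowerSeries R)) (k : ℕ) :
    PowerSeries.coeff (R := R) k (hadamardProdList l) = (l.map (fun A => PowerSeries.coeff (R := R) k A)).prod := by
  induction l with
  | nil => simp [hadamardProdList, coeff_geom]
  | cons a l ih =>
      have : hadamardProdList (a :: l) = hadamard a (hadamardProdList l) := rfl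
      rw [this, List.map_cons, List.prod_cons, coeff_hadamard, ih]

lemma coeff_geom_one_mul {R : Type*} [CommSemiring R] (P : PowerSeries R) (k : ℕ) :
    PowerSeries.coeff (R := R) k (geom (1 : R) * P) = ∑ m ∈ Finset.range (k+1), PowerSeries.coeff (R := R) m P := by
  rw [PowerSeries.coeff_mul]
  rw [Finset.Nat.sum_antidiagonal_eq_sum_range_succ (f := fun i j => (PowerSeries.coeff (R := R) i) (geom 1) * (PowerSeries.coeff (R := R) j) P)]
  calc ∑ i ∈ Finset.range (k+1), (PowerSeries.coeff (R := R) i) (geom 1) * (PowerSeries.coeff (R := R) (k-i)) P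
      = ∑ i ∈ Finset.range (k+1), (PowerSeries.coeff (R := R) (k+1-1-i)) P := by
        apply Finset.sum_congr rfl
        intro i _
        rw [coeff_geom, one_pow, one_mul]
        have h : k - i = k + 1 - 1 - i := by omega
        rw [h]
    _ = _ := Finset.sum_range_reflect (fun m => (PowerSeries.coeff (R := R) m) P) (k+1)

lemma rescale_geom {R : Type*} [CommSemiring R] (r c : R) :
    PowerSeries.rescale r (geom c) = geom (r * c) := by
  ext k
  rw [PowerSeries.coeff_rescale, coeff_geom, coeff_geom, mul_pow]

/-- Monotone sequences of length `N` with entries `≤ M`. -/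
def PSeq (N M : ℕ) : Finset (Fin N → ℕ) :=
  (Fintype.piFinset fun _ => Finset.range (M+1)).filter Monotone

lemma mem_PSeq {N M : ℕ} {f : Fin N → ℕ} :
    f ∈ PSeq N M ↔ (∀ p, f p ≤ M) ∧ Monotone f := by
  simp [PSeq, Fintype.mem_piFinset, Nat.lt_succ_iff]

end HadAux

namespace HadAux
open Finset PowerSeries

lemma fin_eq_mk {N : ℕ} {b : Fin N} {v : ℕ} (h : v < N) (hv : (b : ℕ) = v) :
    b = ⟨v, h⟩ := Fin.ext hv

lemma monotone_of_adj {α : Type*} [Preorder α] {N : ℕ} {f : Fin N → α}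
    (h : ∀ m (hm : m + 1 < N), f ⟨m, by omega⟩ ≤ f ⟨m+1, hm⟩) : Monotone f := by
  have key : ∀ t : ℕ, ∀ a b : Fin N, (b : ℕ) = (a : ℕ) + t → f a ≤ f b := by
    intro t
    induction t with
    | zero => intro a b hb; have : b = a := Fin.ext (by omega); rw [this]
    | succ t ih =>
        intro a b hb
        have hm : (a : ℕ) + t + 1 < N := by omega
        have h1 : f a ≤ f ⟨(a : ℕ) + t, by omega⟩ := ih a _ rfl
        have h2 : f ⟨(a : ℕ) + t, by omega⟩ ≤ f ⟨(a : ℕ) + t + 1, hm⟩ := h _ hm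
        rw [fin_eq_mk hm (by omega : (b : ℕ) = (a : ℕ) + t + 1)]
        exact h1.trans h2
  intro a b hab
  exact key ((b : ℕ) - (a : ℕ)) a b (by have := (Fin.le_def.mp hab); omega)

lemma strictMono_of_adj {α : Type*} [Preorder α] {N : ℕ} {f : Fin N → α}
    (h : ∀ m (hm : m + 1 < N), f ⟨m, by omega⟩ < f ⟨m+1, hm⟩) : StrictMono f := by
  have key : ∀ t : ℕ, ∀ a b : Fin N, (b : ℕ) = (a : ℕ) + t + 1 → f a < f b := by
    intro t
    induction t with
    | zero =>
        intro a b hb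
        have hm : (a : ℕ) + 1 < N := by omega
        rw [fin_eq_mk hm (by omega : (b : ℕ) = (a : ℕ) + 1)]
        have ha : a = ⟨(a : ℕ), a.isLt⟩ := Fin.ext rfl
        have hh := h (a : ℕ) hm
        rw [← ha] at hh
        exact hh
    | succ t ih =>
        intro a b hb
        have hm : (a : ℕ) + t + 1 + 1 < N := by omega
        have h1 : f a < f ⟨(a : ℕ) + t + 1, by omega⟩ := ih a _ rfl
        have h2 : f ⟨(a : ℕ) + t + 1, by omega⟩ < f ⟨(a : ℕ) + t + 1 + 1, hm⟩ := h _ hm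
        rw [fin_eq_mk hm (by omega : (b : ℕ) = (a : ℕ) + t + 1 + 1)]
        exact h1.trans h2
  intro a b hab
  exact key ((b : ℕ) - (a : ℕ) - 1) a b (by have := (Fin.lt_def.mp hab); omega)

lemma coeff_prod_geom {R : Type*} [CommRing R] (c : R) :
    ∀ N M : ℕ, PowerSeries.coeff (R := R) M (∏ i ∈ Finset.range (N+1), geom (c^i)) =
      ∑ l ∈ PSeq N M, c ^ (∑ p, l p) := by
  intro N
  induction N with
  | zero =>
      intro M
      have h0 : PSeq 0 M = {fun _ : Fin 0 => (0 : ℕ)} := by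
        ext f
        simp only [mem_PSeq, Finset.mem_singleton]
        constructor
        · intro _; funext p; exact p.elim0
        · intro hf
          exact ⟨fun p => p.elim0, fun a b _ => a.elim0⟩
      rw [h0, Finset.prod_range_one, Finset.sum_singleton]
      simp [coeff_geom]
  | succ N ih =>
      intro M
      rw [Finset.prod_range_succ']
      have hres : (∏ i ∈ Finset.range (N+1), geom (c^(i+1))) =
          PowerSeries.rescale c (∏ i ∈ Finset.range (N+1), geom (c^i)) := by
        rw [map_prod]
        apply Finset.prod_congr rfl
        intro i _
        rw [rescale_geom, ← pow_succ']
      rw [hres, pow_zero, mul_comm, coeff_geom_one_mul]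
      have hstep : ∀ m, PowerSeries.coeff (R := R) m
          (PowerSeries.rescale c (∏ i ∈ Finset.range (N+1), geom (c^i))) =
          ∑ l ∈ PSeq N m, c ^ (m + ∑ p, l p) := by
        intro m
        rw [PowerSeries.coeff_rescale, ih m, Finset.mul_sum]
        apply Finset.sum_congr rfl
        intro l _
        rw [← pow_add]
      simp_rw [hstep]
      rw [Finset.sum_sigma']
      refine Finset.sum_bij' (fun (x : Σ _ : ℕ, (Fin N → ℕ)) (_ : x ∈ _) => Fin.snoc x.2 x.1)
        (fun (l : Fin (N+1) → ℕ) (_ : l ∈ _) => (⟨l (Fin.last N), Fin.init l⟩ : Σ _ : ℕ, (Fin N → ℕ)))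
        ?_ ?_ ?_ ?_ ?_
      · -- hi : snoc ∈ PSeq (N+1) M
        rintro ⟨m, l⟩ hx
        dsimp only
        simp only [Finset.mem_sigma, Finset.mem_range, mem_PSeq, Nat.lt_succ_iff] at hx
        obtain ⟨hmM, hlm, hlmono⟩ := hx
        rw [mem_PSeq]
        constructor
        · intro p
          induction p using Fin.lastCases with
          | last => rw [Fin.snoc_last]; exact hmM
          | cast q => rw [Fin.snoc_castSucc]; exact (hlm q).trans hmM
        · apply monotone_of_adj
          intro a ha
          have h1 : (⟨a, by omega⟩ : Fin (N+1)) = Fin.castSucc ⟨a, by omega⟩ := rfl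
          by_cases hlast : a + 1 = N
          · have h2 : (⟨a+1, ha⟩ : Fin (N+1)) = Fin.last N := Fin.ext (by simp [hlast])
            rw [h1, h2, Fin.snoc_castSucc, Fin.snoc_last]
            exact hlm _
          · have h2 : (⟨a+1, ha⟩ : Fin (N+1)) = Fin.castSucc ⟨a+1, by omega⟩ := rfl
            rw [h1, h2, Fin.snoc_castSucc, Fin.snoc_castSucc]
            exact hlmono (Fin.mk_le_mk.mpr (by omega))
      · -- hj
        intro l hl
        rw [mem_PSeq] at hl
        obtain ⟨hbd, hmono⟩ := hl
        simp only [Finset.mem_sigma, Finset.mem_range, mem_PSeq, Nat.lt_succ_iff]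
        exact ⟨hbd _, fun p => hmono (Fin.le_last _),
          fun a b hab => hmono (Fin.castSucc_le_castSucc_iff.mpr hab)⟩
      · rintro ⟨m, l⟩ hx
        dsimp only
        simp only [Fin.snoc_last, Fin.init_snoc]
      · intro l hl
        simp only [Fin.snoc_init_self]
      · rintro ⟨m, l⟩ hx
        dsimp only
        congr 1
        rw [Fin.sum_univ_castSucc]
        simp only [Fin.snoc_castSucc, Fin.snoc_last]
        omega

end HadAux

namespace HadAux
open Finset

/-- The coloured permutation word corresponding to `(σ, g)`. -/
def word (n : ℕ) (sg : Equiv.Perm (Fin n) × (Fin n → Bool)) : CPerm :=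
  List.ofFn fun i : Fin n =>
    ((sg.1 i : ℕ) + 1, if sg.2 i then (sg.1 i : ℕ) + 1 else 0)

lemma PiSn_eq (n : ℕ) :
    PiSn n = (Finset.univ : Finset (Equiv.Perm (Fin n) × (Fin n → Bool))).val.map (word n) := rfl

variable {n : ℕ}

/-- Predecessor position. -/
def pred' (p : Fin n) : Fin n := ⟨(p : ℕ) - 1, Nat.lt_of_le_of_lt (Nat.sub_le _ _) p.isLt⟩

/-- `p` is a descent position of the word of `(σ, g)`. -/
def descP (σ : Equiv.Perm (Fin n)) (g : Fin n → Bool) (p : Fin n) : Prop :=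
  if (p : ℕ) = 0 then g p = true
  else if g p then (g (pred' p) = true → (σ (pred' p) : ℕ) < (σ p : ℕ))
  else (g (pred' p) = false ∧ (σ p : ℕ) < (σ (pred' p) : ℕ))

lemma cLt_entry_iff (s s' : ℕ) (b b' : Bool) :
    (cLt (s+1, if b then s+1 else 0) (s'+1, if b' then s'+1 else 0)) ↔
    (if b then (b' = true → s' < s) else (b' = false ∧ s < s')) := by
  cases b <;> cases b' <;> simp [cLt] <;> omega

def desF (σ : Equiv.Perm (Fin n)) (g : Fin n → Bool) : Finset (Fin n) :=
  Finset.univ.filter (descP σ g)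

def cnt (σ : Equiv.Perm (Fin n)) (g : Fin n → Bool) (p : Fin n) : ℕ :=
  ((desF σ g).filter (· ≤ p)).card

lemma length_word (sg : Equiv.Perm (Fin n) × (Fin n → Bool)) : (word n sg).length = n := by
  simp [word]

lemma getD_word (sg : Equiv.Perm (Fin n) × (Fin n → Bool)) (i : ℕ) (h : i < n) :
    (word n sg).getD i (0, 0) =
      ((sg.1 ⟨i, h⟩ : ℕ) + 1, if sg.2 ⟨i, h⟩ then (sg.1 ⟨i, h⟩ : ℕ) + 1 else 0) := by
  rw [List.getD_eq_getElem _ _ (by simpa [length_word] using h)]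
  simp [word]

lemma mem_DesSet_word (sg : Equiv.Perm (Fin n) × (Fin n → Bool)) (i : ℕ) :
    i ∈ DesSet (word n sg) ↔ ∃ h : i < n, descP sg.1 sg.2 ⟨i, h⟩ := by
  unfold DesSet
  rw [Finset.mem_filter, Finset.mem_range, length_word]
  constructor
  · rintro ⟨h, hcond⟩
    refine ⟨h, ?_⟩
    by_cases hi : i = 0
    · subst hi
      rw [if_pos rfl] at hcond
      rw [getD_word sg 0 h] at hcond
      unfold descP
      rw [if_pos rfl]
      by_cases hg : sg.2 ⟨0, h⟩ <;> simp [hg] at hcond ⊢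
    · rw [if_neg hi] at hcond
      have h' : i - 1 < n := by omega
      rw [getD_word sg i h, getD_word sg (i-1) h'] at hcond
      unfold descP
      rw [if_neg hi]
      have hpred : pred' (⟨i, h⟩ : Fin n) = ⟨i - 1, h'⟩ := rfl
      rw [hpred]
      rw [cLt_entry_iff] at hcond
      exact hcond
  · rintro ⟨h, hd⟩
    refine ⟨h, ?_⟩
    by_cases hi : i = 0
    · subst hi
      rw [if_pos rfl, getD_word sg 0 h]
      unfold descP at hd
      rw [if_pos rfl] at hd
      by_cases hg : sg.2 ⟨0, h⟩ <;> simp [hg] at hd ⊢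
    · rw [if_neg hi]
      have h' : i - 1 < n := by omega
      rw [getD_word sg i h, getD_word sg (i-1) h']
      unfold descP at hd
      rw [if_neg hi] at hd
      have hpred : pred' (⟨i, h⟩ : Fin n) = ⟨i - 1, h'⟩ := rfl
      rw [hpred] at hd
      rw [cLt_entry_iff]
      exact hd
  
lemma DesSet_word_eq (sg : Equiv.Perm (Fin n) × (Fin n → Bool)) :
    DesSet (word n sg) = (desF sg.1 sg.2).image Fin.val := by
  ext i
  rw [mem_DesSet_word, Finset.mem_image]
  constructor
  · rintro ⟨h, hd⟩
    exact ⟨⟨i, h⟩, by simp [desF, hd], rfl⟩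
  · rintro ⟨p, hp, rfl⟩
    simp only [desF, Finset.mem_filter] at hp
    refine ⟨p.isLt, ?_⟩
    have : (⟨(p : ℕ), p.isLt⟩ : Fin n) = p := Fin.ext rfl
    rw [this]
    exact hp.2

lemma des_word (sg : Equiv.Perm (Fin n) × (Fin n → Bool)) :
    des (word n sg) = (desF sg.1 sg.2).card := by
  rw [des, DesSet_word_eq, Finset.card_image_of_injective _ Fin.val_injective]

lemma comaj_word (sg : Equiv.Perm (Fin n) × (Fin n → Bool)) :
    comaj (word n sg) = ∑ p ∈ desF sg.1 sg.2, (n - (p : ℕ)) := by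
  rw [comaj, DesSet_word_eq, Finset.sum_image (fun a _ b _ h => Fin.val_injective h)]
  simp [length_word]

lemma cnt_le_card (σ : Equiv.Perm (Fin n)) (g : Fin n → Bool) (p : Fin n) :
    cnt σ g p ≤ (desF σ g).card := Finset.card_filter_le _ _

lemma cnt_last (σ : Equiv.Perm (Fin n)) (g : Fin n → Bool) (hn : 1 ≤ n) :
    cnt σ g ⟨n-1, by omega⟩ = (desF σ g).card := by
  unfold cnt
  rw [Finset.filter_true_of_mem]
  intro j _
  rw [Fin.le_def]
  have := j.isLt
  simp only []
  omega

lemma cnt_zero' (σ : Equiv.Perm (Fin n)) (g : Fin n → Bool) (p : Fin n) (hp : (p : ℕ) = 0) :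
    cnt σ g p = if descP σ g p then 1 else 0 := by
  unfold cnt
  have hfe : (desF σ g).filter (· ≤ p) = (desF σ g).filter (· = p) := by
    apply Finset.filter_congr
    intro j _
    constructor
    · intro hj; exact Fin.ext (by have := Fin.le_def.mp hj; omega)
    · intro hj; exact le_of_eq hj
  rw [hfe, Finset.filter_eq']
  by_cases hd : descP σ g p
  · rw [if_pos (by simp [desF, hd]), if_pos hd, Finset.card_singleton]
  · rw [if_neg (by simp [desF, hd]), if_neg hd, Finset.card_empty]

lemma cnt_succ (σ : Equiv.Perm (Fin n)) (g : Fin n → Bool) (p p' : Fin n)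
    (hp : (p' : ℕ) + 1 = (p : ℕ)) :
    cnt σ g p = cnt σ g p' + (if descP σ g p then 1 else 0) := by
  unfold cnt
  have hsplit : (desF σ g).filter (· ≤ p) = (desF σ g).filter (· ≤ p') ∪ (desF σ g).filter (· = p) := by
    rw [← Finset.filter_or]
    apply Finset.filter_congr
    intro j _
    simp only [Fin.le_def]
    constructor
    · intro hj
      by_cases hje : (j : ℕ) = (p : ℕ)
      · exact Or.inr (Fin.ext hje)
      · exact Or.inl (by omega)
    · rintro (hj | rfl)
      · omega
      · omega
  rw [hsplit, Finset.card_union_of_disjoint]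
  · congr 1
    rw [Finset.filter_eq']
    by_cases hd : descP σ g p
    · rw [if_pos (by simp [desF, hd]), if_pos hd, Finset.card_singleton]
    · rw [if_neg (by simp [desF, hd]), if_neg hd, Finset.card_empty]
  · rw [Finset.disjoint_filter]
    rintro j _ hj rfl
    have := Fin.le_def.mp hj
    omega

lemma sum_cnt (σ : Equiv.Perm (Fin n)) (g : Fin n → Bool) :
    ∑ p : Fin n, cnt σ g p = ∑ j ∈ desF σ g, (n - (j : ℕ)) := by
  unfold cnt
  have h1 : ∀ p : Fin n, ((desF σ g).filter (· ≤ p)).card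
      = ∑ j ∈ desF σ g, if j ≤ p then 1 else 0 := fun p => Finset.card_filter _ _
  simp_rw [h1]
  rw [Finset.sum_comm]
  apply Finset.sum_congr rfl
  intro j _
  have h2 : ∑ p : Fin n, (if j ≤ p then 1 else 0) = (Finset.univ.filter (fun p => j ≤ p)).card :=
    (Finset.card_filter _ _).symm
  rw [h2]
  have h3 : Finset.univ.filter (fun p => j ≤ p) = Finset.Ici j := by
    ext x; simp
  rw [h3, Fin.card_Ici]

lemma exists_desc_le_of_g (σ : Equiv.Perm (Fin n)) (g : Fin n → Bool) (p : Fin n)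
    (hp : g p = true) : ∃ j ∈ desF σ g, j ≤ p := by
  have key : ∀ m : ℕ, ∀ h : m < n, g ⟨m, h⟩ = true → ∃ j ∈ desF σ g, j ≤ ⟨m, h⟩ := by
    intro m
    induction m with
    | zero =>
        intro h hg
        refine ⟨⟨0, h⟩, ?_, le_refl _⟩
        simp only [desF, Finset.mem_filter, Finset.mem_univ, true_and]
        unfold descP
        rw [if_pos rfl]
        exact hg
    | succ m ih =>
        intro h hg
        by_cases hgm : g ⟨m, by omega⟩ = true
        · obtain ⟨j, hj, hjle⟩ := ih (by omega) hgm
          exact ⟨j, hj, hjle.trans (Fin.mk_le_mk.mpr (by omega))⟩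
        · refine ⟨⟨m+1, h⟩, ?_, le_refl _⟩
          simp only [desF, Finset.mem_filter, Finset.mem_univ, true_and]
          unfold descP
          rw [if_neg (by simp)]
          have hpred : pred' (⟨m+1, h⟩ : Fin n) = ⟨m, by omega⟩ := Fin.ext rfl
          rw [if_pos hg, hpred]
          intro hc
          exact absurd hc hgm
  obtain ⟨j, hj, hjle⟩ := key (p : ℕ) p.isLt (by rwa [show (⟨(p:ℕ), p.isLt⟩ : Fin n) = p from Fin.ext rfl])
  exact ⟨j, hj, hjle.trans_eq (Fin.ext rfl)⟩

lemma alphaD_word_eq (d : ℕ → ℕ) (sg : Equiv.Perm (Fin n) × (Fin n → Bool)) :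
    alphaD d (word n sg) = ∏ p : Fin n, (if sg.2 p then -XX ^ (-(d ((sg.1 p : ℕ) + 1) : ℤ)) else 1) := by
  unfold alphaD word
  rw [List.map_ofFn, List.prod_ofFn]
  apply Finset.prod_congr rfl
  intro p _
  simp only [Function.comp]
  by_cases hg : sg.2 p <;> simp [hg]

end HadAux

namespace HadAux
open Finset

variable {n : ℕ}

def rank (γ : Fin n → Bool) (i : Fin n) : ℕ := if γ i then n - 1 - (i : ℕ) else n + (i : ℕ)

def key (v : Fin n → ℕ) (γ : Fin n → Bool) (i : Fin n) : ℕ := v i * (2 * n) + rank γ i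

lemma rank_lt (γ : Fin n → Bool) (i : Fin n) : rank γ i < 2 * n := by
  have := i.isLt; unfold rank; split <;> omega

lemma rank_inj (γ : Fin n → Bool) {i j : Fin n} (h : rank γ i = rank γ j) : i = j := by
  have hi := i.isLt; have hj := j.isLt
  unfold rank at h
  apply Fin.ext
  split_ifs at h <;> omega

lemma key_lt_iff (v : Fin n → ℕ) (γ : Fin n → Bool) (a b : Fin n) :
    key v γ a < key v γ b ↔ (v a < v b ∨ (v a = v b ∧ rank γ a < rank γ b)) := by
  have ha := rank_lt γ a; have hb := rank_lt γ b
  unfold key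
  constructor
  · intro h
    rcases lt_trichotomy (v a) (v b) with h1 | h1 | h1
    · exact Or.inl h1
    · refine Or.inr ⟨h1, ?_⟩
      rw [h1] at h
      exact lt_of_add_lt_add_left h
    · exfalso
      have h2 : (v b + 1) * (2 * n) ≤ v a * (2 * n) := Nat.mul_le_mul_right _ h1
      have h3 : v b * (2 * n) + rank γ b < (v b + 1) * (2 * n) := by
        rw [add_one_mul]; exact add_lt_add_right hb _
      exact absurd h (not_lt.mpr (le_trans (le_trans h3.le h2) (Nat.le_add_right _ _)))
  · rintro (h | ⟨h1, h2⟩)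
    · have h2 : (v a + 1) * (2 * n) ≤ v b * (2 * n) := Nat.mul_le_mul_right _ h
      have h3 : v a * (2 * n) + rank γ a < (v a + 1) * (2 * n) := by
        rw [add_one_mul]; exact add_lt_add_right ha _
      exact lt_of_lt_of_le h3 (le_trans h2 (Nat.le_add_right _ _))
    · rw [h1]; exact add_lt_add_right h2 _

lemma key_injective (v : Fin n → ℕ) (γ : Fin n → Bool) : Function.Injective (key v γ) := by
  intro a b h
  rcases lt_trichotomy (v a) (v b) with h1 | h1 | h1
  · exact absurd ((key_lt_iff v γ a b).mpr (Or.inl h1)) (by rw [h]; exact lt_irrefl _)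
  · apply rank_inj γ
    unfold key at h
    rw [h1] at h
    exact Nat.add_left_cancel h
  · exact absurd ((key_lt_iff v γ b a).mpr (Or.inl h1)) (by rw [h]; exact lt_irrefl _)

lemma sort_eq_of_strictMono {α : Type*} [LinearOrder α] {f : Fin n → α}
    (hf : Function.Injective f) (σ : Equiv.Perm (Fin n)) (h : StrictMono (f ∘ σ)) :
    Tuple.sort f = σ := by
  symm
  rw [Tuple.eq_sort_iff]
  exact ⟨h.monotone, fun i j hij hf' => absurd (σ.injective (hf hf')) (ne_of_lt hij)⟩

lemma descP_iff_rank (σ : Equiv.Perm (Fin n)) (g : Fin n → Bool) (γ : Fin n → Bool)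
    (hγ : ∀ p, γ (σ p) = g p) (p p' : Fin n) (hp : (p' : ℕ) + 1 = (p : ℕ)) :
    descP σ g p ↔ rank γ (σ p) < rank γ (σ p') := by
  have hpred : pred' p = p' := Fin.ext (by simp [pred']; omega)
  have h1 := (σ p).isLt
  have h2 := (σ p').isLt
  have hne : (σ p : ℕ) ≠ (σ p' : ℕ) := by
    intro hc
    have : p = p' := σ.injective (Fin.ext hc)
    rw [this] at hp; omega
  unfold descP rank
  rw [if_neg (by omega), hpred, hγ, hγ]
  by_cases hgp : g p = true <;> by_cases hgp' : g p' = true <;>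
    simp only [hgp, hgp'] <;> simp [hgp, hgp'] <;> omega

/-- The permutation sorting a coloured configuration. -/
def sortOf (f : Fin n → ℕ × Bool) : Equiv.Perm (Fin n) :=
  Tuple.sort (key (fun i => (f i).1) (fun i => (f i).2))

def gOf (f : Fin n → ℕ × Bool) : Fin n → Bool := fun p => (f (sortOf f p)).2

def uOf (f : Fin n → ℕ × Bool) : Fin n → ℕ := fun p => (f (sortOf f p)).1

def lamOf (f : Fin n → ℕ × Bool) : Fin n → ℕ :=
  fun p => uOf f p - cnt (sortOf f) (gOf f) p

lemma strictMono_key_sortOf (f : Fin n → ℕ × Bool) :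
    StrictMono ((key (fun i => (f i).1) (fun i => (f i).2)) ∘ (sortOf f)) :=
  (Tuple.monotone_sort _).strictMono_of_injective
    ((key_injective _ _).comp (Equiv.injective _))

lemma sorted_step (f : Fin n → ℕ × Bool) (p p' : Fin n) (hp : (p' : ℕ) + 1 = (p : ℕ)) :
    if descP (sortOf f) (gOf f) p then uOf f p' < uOf f p else uOf f p' ≤ uOf f p := by
  have hlt : p' < p := by rw [Fin.lt_def]; omega
  have h := strictMono_key_sortOf f hlt
  rw [Function.comp_apply, Function.comp_apply, key_lt_iff] at h
  have hdr := descP_iff_rank (sortOf f) (gOf f) (fun i => (f i).2) (fun _ => rfl) p p' hp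
  by_cases hd : descP (sortOf f) (gOf f) p
  · rw [if_pos hd]
    rcases h with h | ⟨h1, h2⟩
    · exact h
    · exfalso
      rw [hdr] at hd
      omega
  · rw [if_neg hd]
    rcases h with h | ⟨h1, h2⟩
    · exact h.le
    · exact h1.le

lemma cnt_le_uOf (f : Fin n → ℕ × Bool) (hval : ∀ i, (f i).2 = true → 1 ≤ (f i).1) :
    ∀ p, cnt (sortOf f) (gOf f) p ≤ uOf f p := by
  have key : ∀ m : ℕ, ∀ h : m < n, cnt (sortOf f) (gOf f) ⟨m, h⟩ ≤ uOf f ⟨m, h⟩ := by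
    intro m
    induction m with
    | zero =>
        intro h
        rw [cnt_zero' _ _ _ rfl]
        by_cases hd : descP (sortOf f) (gOf f) ⟨0, h⟩
        · rw [if_pos hd]
          unfold descP at hd
          rw [if_pos rfl] at hd
          exact hval _ hd
        · rw [if_neg hd]; exact Nat.zero_le _
    | succ m ih =>
        intro h
        have h' : m < n := by omega
        rw [cnt_succ _ _ ⟨m+1, h⟩ ⟨m, h'⟩ rfl]
        have hstep := sorted_step f ⟨m+1, h⟩ ⟨m, h'⟩ rfl
        by_cases hd : descP (sortOf f) (gOf f) ⟨m+1, h⟩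
        · rw [if_pos hd]
          rw [if_pos hd] at hstep
          have := ih h'
          omega
        · rw [if_neg hd]
          rw [if_neg hd] at hstep
          have := ih h'
          omega
  intro p
  have := key (p : ℕ) p.isLt
  have hp : (⟨(p : ℕ), p.isLt⟩ : Fin n) = p := Fin.ext rfl
  rwa [hp] at this

end HadAux

namespace HadAux
open Finset

variable {n : ℕ}

def Tk (k : ℕ) : Finset (ℕ × Bool) :=
  (Finset.range (k+1) ×ˢ {false}) ∪ ((Finset.Icc 1 k) ×ˢ {true})

lemma mem_Tk {k : ℕ} {jb : ℕ × Bool} :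
    jb ∈ Tk k ↔ (jb.1 ≤ k ∧ (jb.2 = true → 1 ≤ jb.1)) := by
  rcases jb with ⟨j, b⟩
  cases b <;> simp [Tk, Nat.lt_succ_iff] <;> omega

def wK (c : K) (β : Fin n → K) (i : Fin n) (jb : ℕ × Bool) : K :=
  (if jb.2 then β i else 1) * c ^ jb.1

lemma sum_Tk (c : K) (β : Fin n → K) (k : ℕ) (i : Fin n) :
    ∑ jb ∈ Tk k, wK c β i jb =
      (∑ j ∈ Finset.range (k+1), c^j) + β i * (∑ j ∈ Finset.Icc 1 k, c^j) := by
  unfold Tk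
  rw [Finset.sum_union]
  · rw [Finset.sum_product, Finset.sum_product]
    simp [wK, Finset.mul_sum]
  · rw [Finset.disjoint_left]
    rintro ⟨j, b⟩ h1 h2
    rw [Finset.mem_product] at h1 h2
    rw [Finset.mem_singleton] at *
    rw [h1.2] at h2
    exact absurd h2.2 (by simp)

def PhiF (σ : Equiv.Perm (Fin n)) (g : Fin n → Bool) (lam : Fin n → ℕ) : Fin n → ℕ × Bool :=
  fun i => (lam (σ.symm i) + cnt σ g (σ.symm i), g (σ.symm i))

def PsiF (f : Fin n → ℕ × Bool) :
    Σ _ : Equiv.Perm (Fin n) × (Fin n → Bool), (Fin n → ℕ) :=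
  ⟨(sortOf f, gOf f), lamOf f⟩

lemma strictMono_key_PhiF (σ : Equiv.Perm (Fin n)) (g : Fin n → Bool) (lam : Fin n → ℕ)
    (hmono : Monotone lam) :
    StrictMono ((key (fun i => (PhiF σ g lam i).1) (fun i => (PhiF σ g lam i).2)) ∘ σ) := by
  apply strictMono_of_adj
  intro m hm
  have h' : m < n := by omega
  set p' : Fin n := ⟨m, h'⟩ with hp'def
  set p : Fin n := ⟨m+1, hm⟩ with hpdef
  rw [Function.comp_apply, Function.comp_apply, key_lt_iff]
  have hv : ∀ q : Fin n, (PhiF σ g lam (σ q)).1 = lam q + cnt σ g q := by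
    intro q; simp [PhiF]
  have hγ : ∀ q : Fin n, (fun i => (PhiF σ g lam i).2) (σ q) = g q := by
    intro q; simp [PhiF]
  rw [hv, hv]
  have hcnt := cnt_succ σ g p p' rfl
  have hdr := descP_iff_rank σ g (fun i => (PhiF σ g lam i).2) hγ p p' rfl
  have hlam : lam p' ≤ lam p := hmono (Fin.mk_le_mk.mpr (by omega))
  by_cases hd : descP σ g p
  · left
    rw [hcnt, if_pos hd]
    omega
  · rw [hcnt, if_neg hd]
    rcases Nat.lt_or_ge (lam p' + cnt σ g p') (lam p + (cnt σ g p' + 0)) with hlt | hge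
    · left; omega
    · right
      constructor
      · omega
      · have hne : rank (fun i => (PhiF σ g lam i).2) (σ p') ≠ rank (fun i => (PhiF σ g lam i).2) (σ p) := by
          intro hc
          have h2 := σ.injective (rank_inj _ hc)
          rw [hp'def, hpdef] at h2
          have := congrArg Fin.val h2
          simp at this
        have hnd : ¬ (rank (fun i => (PhiF σ g lam i).2) (σ p) < rank (fun i => (PhiF σ g lam i).2) (σ p')) := by
          rw [← hdr]; exact hd
        omega

lemma sortOf_PhiF (σ : Equiv.Perm (Fin n)) (g : Fin n → Bool) (lam : Fin n → ℕ)
    (hmono : Monotone lam) : sortOf (PhiF σ g lam) = σ :=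
  sort_eq_of_strictMono (key_injective _ _) σ (strictMono_key_PhiF σ g lam hmono)

lemma gOf_PhiF (σ : Equiv.Perm (Fin n)) (g : Fin n → Bool) (lam : Fin n → ℕ)
    (hmono : Monotone lam) : gOf (PhiF σ g lam) = g := by
  funext p
  unfold gOf
  rw [sortOf_PhiF σ g lam hmono]
  simp [PhiF]

lemma uOf_PhiF (σ : Equiv.Perm (Fin n)) (g : Fin n → Bool) (lam : Fin n → ℕ)
    (hmono : Monotone lam) : uOf (PhiF σ g lam) = fun p => lam p + cnt σ g p := by
  funext p
  unfold uOf
  rw [sortOf_PhiF σ g lam hmono]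
  simp [PhiF]

lemma lamOf_PhiF (σ : Equiv.Perm (Fin n)) (g : Fin n → Bool) (lam : Fin n → ℕ)
    (hmono : Monotone lam) : lamOf (PhiF σ g lam) = lam := by
  unfold lamOf
  rw [uOf_PhiF σ g lam hmono, gOf_PhiF σ g lam hmono, sortOf_PhiF σ g lam hmono]
  funext p
  simp

lemma uOf_eq (f : Fin n → ℕ × Bool) (hval : ∀ i, (f i).2 = true → 1 ≤ (f i).1) (p : Fin n) :
    uOf f p = lamOf f p + cnt (sortOf f) (gOf f) p := by
  unfold lamOf
  have := cnt_le_uOf f hval p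
  omega

lemma lamOf_monotone (f : Fin n → ℕ × Bool) (hval : ∀ i, (f i).2 = true → 1 ≤ (f i).1) :
    Monotone (lamOf f) := by
  apply monotone_of_adj
  intro m hm
  have h' : m < n := by omega
  have hstep := sorted_step f ⟨m+1, hm⟩ ⟨m, h'⟩ rfl
  have hcnt := cnt_succ (sortOf f) (gOf f) ⟨m+1, hm⟩ ⟨m, h'⟩ rfl
  have hle1 := cnt_le_uOf f hval ⟨m, h'⟩
  have hle2 := cnt_le_uOf f hval ⟨m+1, hm⟩
  unfold lamOf
  by_cases hd : descP (sortOf f) (gOf f) ⟨m+1, hm⟩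
  · rw [if_pos hd] at hstep
    rw [hcnt, if_pos hd]
    omega
  · rw [if_neg hd] at hstep
    rw [hcnt, if_neg hd]
    omega

lemma PhiF_PsiF (f : Fin n → ℕ × Bool) (hval : ∀ i, (f i).2 = true → 1 ≤ (f i).1) :
    PhiF (sortOf f) (gOf f) (lamOf f) = f := by
  funext i
  unfold PhiF
  have h1 : lamOf f ((sortOf f).symm i) + cnt (sortOf f) (gOf f) ((sortOf f).symm i)
      = uOf f ((sortOf f).symm i) := (uOf_eq f hval _).symm
  rw [h1]
  unfold uOf gOf
  rw [Equiv.apply_symm_apply]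

lemma key_ident (hn : 1 ≤ n) (c : K) (β : Fin n → K) (k : ℕ) :
    (∏ i : Fin n, ((∑ j ∈ Finset.range (k+1), c^j) + β i * (∑ j ∈ Finset.Icc 1 k, c^j)))
    = ∑ sg : Equiv.Perm (Fin n) × (Fin n → Bool),
        ((∏ p : Fin n, if sg.2 p then β (sg.1 p) else 1) * c ^ (∑ p, cnt sg.1 sg.2 p) *
         (if (desF sg.1 sg.2).card ≤ k then
            ∑ l ∈ PSeq n (k - (desF sg.1 sg.2).card), c ^ (∑ p, l p) else 0)) := by
  have h1 : ∀ i : Fin n, (∑ j ∈ Finset.range (k+1), c^j) + β i * (∑ j ∈ Finset.Icc 1 k, c^j)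
      = ∑ jb ∈ Tk k, wK c β i jb := fun i => (sum_Tk c β k i).symm
  simp_rw [h1]
  rw [Finset.prod_univ_sum]
  have h2 : ∀ sg : Equiv.Perm (Fin n) × (Fin n → Bool),
      ((∏ p : Fin n, if sg.2 p then β (sg.1 p) else 1) * c ^ (∑ p, cnt sg.1 sg.2 p) *
       (if (desF sg.1 sg.2).card ≤ k then
          ∑ l ∈ PSeq n (k - (desF sg.1 sg.2).card), c ^ (∑ p, l p) else 0))
      = ∑ l ∈ (if (desF sg.1 sg.2).card ≤ k then PSeq n (k - (desF sg.1 sg.2).card) else (∅ : Finset (Fin n → ℕ))),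
          ((∏ p : Fin n, if sg.2 p then β (sg.1 p) else 1) * c ^ (∑ p : Fin n, (cnt sg.1 sg.2 p + l p))) := by
    intro sg
    split_ifs with hc
    · rw [Finset.mul_sum]
      apply Finset.sum_congr rfl
      intro l _
      rw [mul_assoc, ← pow_add, ← Finset.sum_add_distrib]
    · simp
  simp_rw [h2]
  rw [Finset.sum_sigma']
  symm
  refine Finset.sum_bij'
    (i := fun (x : Σ _ : Equiv.Perm (Fin n) × (Fin n → Bool), (Fin n → ℕ)) (_ : x ∈ _) =>
      PhiF x.1.1 x.1.2 x.2)
    (j := fun (f : Fin n → ℕ × Bool) (_ : f ∈ _) => PsiF f)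
    ?_ ?_ ?_ ?_ ?_
  · -- hi : PhiF x ∈ piFinset
    rintro ⟨⟨σ, g⟩, lam⟩ hx
    dsimp only at hx ⊢
    rw [Finset.mem_sigma] at hx
    obtain ⟨-, hlam⟩ := hx
    by_cases hk : (desF σ g).card ≤ k
    swap
    · rw [if_neg hk] at hlam; exact absurd hlam (Finset.notMem_empty _)
    rw [if_pos hk, mem_PSeq] at hlam
    obtain ⟨hbd, hmono⟩ := hlam
    have hbd' : ∀ p : Fin n, lam p ≤ k - (desF σ g).card := hbd
    rw [Fintype.mem_piFinset]
    intro i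
    rw [mem_Tk]
    constructor
    · show lam (σ.symm i) + cnt σ g (σ.symm i) ≤ k
      have := hbd' (σ.symm i)
      have := cnt_le_card σ g (σ.symm i)
      omega
    · intro hg
      have hg' : g (σ.symm i) = true := hg
      obtain ⟨j, hj, hjle⟩ := exists_desc_le_of_g σ g (σ.symm i) hg'
      have hpos : 0 < cnt σ g (σ.symm i) :=
        Finset.card_pos.mpr ⟨j, Finset.mem_filter.mpr ⟨hj, hjle⟩⟩
      show 1 ≤ lam (σ.symm i) + cnt σ g (σ.symm i)
      omega
  · -- hj : PsiF f ∈ sigma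
    intro f hf
    dsimp only [PsiF]
    rw [Fintype.mem_piFinset] at hf
    have hval : ∀ i, (f i).2 = true → 1 ≤ (f i).1 := fun i => (mem_Tk.mp (hf i)).2
    have hbd : ∀ i, (f i).1 ≤ k := fun i => (mem_Tk.mp (hf i)).1
    have hlast : (n : ℕ) - 1 < n := by omega
    have hcard : (desF (sortOf f) (gOf f)).card ≤ k := by
      have h3 := cnt_last (sortOf f) (gOf f) hn
      have h4 := cnt_le_uOf f hval ⟨n-1, hlast⟩
      have h5 : uOf f ⟨n-1, hlast⟩ ≤ k := hbd _
      omega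
    rw [Finset.mem_sigma]
    refine ⟨Finset.mem_univ _, ?_⟩
    rw [if_pos hcard, mem_PSeq]
    constructor
    · intro p
      show lamOf f p ≤ k - (desF (sortOf f) (gOf f)).card
      have hmono := lamOf_monotone f hval
      have hple : p ≤ ⟨n-1, hlast⟩ := by rw [Fin.le_def]; have := p.isLt; simp; omega
      have h6 : lamOf f p ≤ lamOf f ⟨n-1, hlast⟩ := hmono hple
      have h7 : lamOf f ⟨n-1, hlast⟩ = uOf f ⟨n-1, hlast⟩ - (desF (sortOf f) (gOf f)).card := by
        unfold lamOf
        rw [cnt_last (sortOf f) (gOf f) hn]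
      have h5 : uOf f ⟨n-1, hlast⟩ ≤ k := hbd _
      omega
    · exact lamOf_monotone f hval
  · -- left_inv : PsiF (PhiF x) = x
    rintro ⟨⟨σ, g⟩, lam⟩ hx
    dsimp only at hx ⊢
    rw [Finset.mem_sigma] at hx
    obtain ⟨-, hlam⟩ := hx
    have hmono : Monotone lam := by
      by_cases hk : (desF σ g).card ≤ k
      · rw [if_pos hk, mem_PSeq] at hlam; exact hlam.2
      · rw [if_neg hk] at hlam; exact absurd hlam (Finset.notMem_empty _)
    unfold PsiF
    rw [sortOf_PhiF σ g lam hmono, gOf_PhiF σ g lam hmono, lamOf_PhiF σ g lam hmono]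
  · -- right_inv : PhiF (PsiF f) = f
    intro f hf
    dsimp only [PsiF]
    rw [Fintype.mem_piFinset] at hf
    have hval : ∀ i, (f i).2 = true → 1 ≤ (f i).1 := fun i => (mem_Tk.mp (hf i)).2
    exact PhiF_PsiF f hval
  · -- weights
    rintro ⟨⟨σ, g⟩, lam⟩ hx
    dsimp only
    have hsplit : ∀ i : Fin n, wK c β i (PhiF σ g lam i)
        = (if g (σ.symm i) then β i else 1) * c ^ (lam (σ.symm i) + cnt σ g (σ.symm i)) :=
      fun i => rfl
    symm
    simp_rw [hsplit]
    rw [Finset.prod_mul_distrib, Finset.prod_pow_eq_pow_sum]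
    rw [← Equiv.prod_comp σ (fun i => if g (σ.symm i) = true then β i else 1)]
    rw [← Equiv.sum_comp σ (fun i => lam (σ.symm i) + cnt σ g (σ.symm i))]
    congr 1
    · apply Finset.prod_congr rfl
      intro p _
      rw [Equiv.symm_apply_apply]
    · congr 1
      apply Finset.sum_congr rfl
      intro p _
      rw [Equiv.symm_apply_apply]
      omega
  
end HadAux

namespace HadAux
open Finset PowerSeries

lemma sum_Icc_one {M : Type*} [AddCommMonoid M] (f : ℕ → M) (k : ℕ) :
    ∑ j ∈ Finset.Icc 1 k, f j = ∑ j ∈ Finset.range k, f (j+1) := by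
  refine Finset.sum_bij' (i := fun j (_ : j ∈ Finset.Icc 1 k) => j - 1)
    (j := fun j (_ : j ∈ Finset.range k) => j + 1) ?_ ?_ ?_ ?_ ?_
  · intro a ha; rw [Finset.mem_Icc] at ha; rw [Finset.mem_range]; omega
  · intro a ha; rw [Finset.mem_range] at ha; rw [Finset.mem_Icc]; omega
  · intro a ha; rw [Finset.mem_Icc] at ha; omega
  · intro a ha; omega
  · intro a ha; rw [Finset.mem_Icc] at ha; congr 1; omega

lemma coeff_factor (u cc : K) (k : ℕ) :
    PowerSeries.coeff (R := K) k ((1 - PowerSeries.C u * PowerSeries.X) * geom 1 * geom cc)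
      = (∑ j ∈ Finset.range (k+1), cc^j) - u * (∑ j ∈ Finset.range k, cc^j) := by
  have h1 : (1 - PowerSeries.C u * PowerSeries.X) * geom 1 * geom cc
      = geom 1 * geom cc - PowerSeries.C u * ((geom 1 * geom cc) * PowerSeries.X ^ 1) := by
    ring
  have hG : ∀ m : ℕ, PowerSeries.coeff (R := K) m (geom (1:K) * geom cc) = ∑ j ∈ Finset.range (m+1), cc^j := by
    intro m
    rw [coeff_geom_one_mul]
    exact Finset.sum_congr rfl fun j _ => coeff_geom cc j
  rw [h1, map_sub, PowerSeries.coeff_C_mul, PowerSeries.coeff_mul_X_pow', hG]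
  by_cases hk : 1 ≤ k
  · rw [if_pos hk, hG]
    have h2 : k - 1 + 1 = k := by omega
    rw [h2]
  · have hk0 : k = 0 := by omega
    subst hk0
    rw [if_neg (by omega)]
    simp

end HadAux

namespace HadAux
open Finset PowerSeries

lemma list_prod_range {M : Type*} [CommMonoid M] (n : ℕ) (h : ℕ → M) :
    ((List.range n).map h).prod = ∏ i ∈ Finset.range n, h i := rfl

lemma key_ident_range {n : ℕ} (hn : 1 ≤ n) (c : K) (bN : ℕ → K) (k : ℕ) :
    (∏ i ∈ Finset.range n, ((∑ j ∈ Finset.range (k+1), c^j) + bN (i+1) * (∑ j ∈ Finset.Icc 1 k, c^j)))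
    = ∑ sg : Equiv.Perm (Fin n) × (Fin n → Bool),
        ((∏ p : Fin n, if sg.2 p then bN ((sg.1 p : ℕ) + 1) else 1) * c ^ (∑ p, cnt sg.1 sg.2 p) *
         (if (desF sg.1 sg.2).card ≤ k then
            ∑ l ∈ PSeq n (k - (desF sg.1 sg.2).card), c ^ (∑ p, l p) else 0)) := by
  rw [← Fin.prod_univ_eq_prod_range
    (fun m => (∑ j ∈ Finset.range (k+1), c^j) + bN (m+1) * (∑ j ∈ Finset.Icc 1 k, c^j)) n]
  exact key_ident hn c (fun p => bN ((p : ℕ) + 1)) k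

end HadAux

/-- **Corollary.** For positive integers `d₁,…,d_n`, `e₁,…,e_n` with constant
difference `δ = dᵢ − eᵢ`:
`⊛ᵢ (1 − X^{−eᵢ}Y)/((1−Y)(1−X^δY)) =
 (Σ_{a ∈ Π(S_n)} α(a) X^{δ·comaj(a)} Y^{des(a)}) / ((1−Y)(1−X^δY)⋯(1−X^{nδ}Y))`. -/
theorem hadamard_Mat_family (n : ℕ) (hn : 1 ≤ n) (d e : ℕ → ℕ) (δ : ℤ)
    (hd : ∀ i ∈ Finset.Icc 1 n, 0 < d i) (he : ∀ i ∈ Finset.Icc 1 n, 0 < e i)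
    (hδ : ∀ i ∈ Finset.Icc 1 n, (d i : ℤ) - (e i : ℤ) = δ) :
    hadamardProdList ((List.range n).map fun i =>
        (1 - PowerSeries.C (XX ^ (-(e (i + 1) : ℤ))) * PowerSeries.X) *
          geom (1 : K) * geom (XX ^ δ)) =
      ((PiSn n).map fun a =>
          PowerSeries.C (alphaD d a * XX ^ (δ * (comaj a : ℤ))) *
            PowerSeries.X ^ des a).sum *
        ∏ i ∈ Finset.range (n + 1), geom (XX ^ (δ * (i : ℤ))) := by
  have hX : (XX : K) ≠ 0 := RatFunc.X_ne_zero
  apply PowerSeries.ext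
  intro k
  have hfac : ∀ i ∈ Finset.range n,
      ((PowerSeries.coeff (R := K) k) ∘ fun i =>
        (1 - PowerSeries.C (XX ^ (-(e (i + 1) : ℤ))) * PowerSeries.X) *
          geom (1 : K) * geom (XX ^ δ)) i
      = ((∑ j ∈ Finset.range (k+1), ((XX:K)^δ)^j) +
          (-XX ^ (-(d (i + 1) : ℤ))) * (∑ j ∈ Finset.Icc 1 k, ((XX:K)^δ)^j)) := by
    intro i hi
    rw [Finset.mem_range] at hi
    rw [Function.comp_apply, HadAux.coeff_factor]
    have hshift : (∑ j ∈ Finset.Icc 1 k, ((XX:K)^δ)^j) = ∑ j ∈ Finset.range k, ((XX:K)^δ)^(j+1) :=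
      HadAux.sum_Icc_one (fun j => ((XX:K)^δ)^j) k
    rw [hshift, sub_eq_add_neg, ← neg_mul, Finset.mul_sum, Finset.mul_sum]
    congr 1
    apply Finset.sum_congr rfl
    intro j _
    have hde : (d (i+1) : ℤ) - (e (i+1) : ℤ) = δ := hδ (i+1) (by rw [Finset.mem_Icc]; omega)
    rw [← zpow_natCast ((XX:K) ^ δ) j, ← zpow_mul, ← zpow_natCast ((XX:K) ^ δ) (j+1), ← zpow_mul]
    rw [neg_mul, neg_mul, ← zpow_add₀ hX, ← zpow_add₀ hX]
    have hexp : (-(e (i+1) : ℤ)) + δ * (j : ℤ) = (-(d (i+1) : ℤ)) + δ * (((j+1 : ℕ)) : ℤ) := by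
      push_cast
      linear_combination hde
    rw [hexp]
  rw [HadAux.coeff_hadamardProdList, List.map_map, HadAux.list_prod_range,
    Finset.prod_congr rfl hfac, HadAux.key_ident_range hn ((XX:K)^δ) (fun m => -XX ^ (-(d m : ℤ))) k]
  -- now handle the RHS
  rw [← Multiset.sum_map_mul_right, map_multiset_sum, Multiset.map_map, HadAux.PiSn_eq,
    Multiset.map_map, Finset.sum_map_val]
  apply Finset.sum_congr rfl
  intro sg _
  simp only [Function.comp_apply]
  have hP : (∏ i ∈ Finset.range (n + 1), geom (XX ^ (δ * (i : ℤ)))) =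
      ∏ i ∈ Finset.range (n + 1), geom (((XX:K)^δ) ^ i) := by
    apply Finset.prod_congr rfl
    intro i _
    rw [zpow_mul, zpow_natCast]
  have h0 : PowerSeries.C (alphaD d (HadAux.word n sg) * XX ^ (δ * (comaj (HadAux.word n sg) : ℤ))) *
        PowerSeries.X ^ des (HadAux.word n sg) * (∏ i ∈ Finset.range (n + 1), geom (XX ^ (δ * (i : ℤ))))
      = ((∏ i ∈ Finset.range (n + 1), geom (XX ^ (δ * (i : ℤ)))) *
          PowerSeries.C (alphaD d (HadAux.word n sg) * XX ^ (δ * (comaj (HadAux.word n sg) : ℤ)))) *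
        PowerSeries.X ^ des (HadAux.word n sg) := by
    ring
  rw [h0, PowerSeries.coeff_mul_X_pow', PowerSeries.coeff_mul_C, HadAux.des_word sg, hP,
    HadAux.coeff_prod_geom ((XX:K)^δ) n, HadAux.alphaD_word_eq d sg, HadAux.comaj_word sg,
    ← HadAux.sum_cnt sg.1 sg.2, zpow_mul, zpow_natCast]
  split_ifs with hm
  · ring
  · rw [mul_zero]

end
end
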